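/- arXiv:0902.4098 — 4 statements merged into one kernel-verified Lean document; each statement's English description precedes it below -/
import Mathlib

section
/- The rank of the Kirchhoff matrix L of a weighted digraph Γ on n vertices equals n − d, where d is the out-forest dimension of Γ (the number of weak components in a maximum spanning diverging forest of Γ). -/
open Finset

variable {n : ℕ}

/-- Kirchhoff (Laplacian) matrix of the weighted digraph whose arc `(j, i)`
has weight `a i j` (so `a i j` is the weight with which agent `i` accounts for `j`). -/
noncomputable def kirchhoff (a : Matrix (Fin n) (Fin n) ℝ) : Matrix (Fin n) (Fin n) ℝ :=
  Matrix.of fun i j => if i = j then ∑ k ∈ Finset.univ.erase i, a i k else -a i j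

/-- `F` is a spanning diverging forest (out-forest) of the digraph with arcs
`u → v` present iff `a v u > 0`: every arc of `F` is an arc of the digraph,
every vertex has in-degree at most one in `F`, and `F` has no directed cycles
(equivalently, no infinite directed walk). -/
def IsOutForest (a : Matrix (Fin n) (Fin n) ℝ) (F : Finset (Fin n × Fin n)) : Prop :=
  (∀ e ∈ F, 0 < a e.2 e.1) ∧
  (∀ u u' v : Fin n, (u, v) ∈ F → (u', v) ∈ F → u = u') ∧
  ¬ ∃ f : ℕ → Fin n, ∀ k, (f k, f (k + 1)) ∈ F

/-- Number of arcs of a maximum out-forest. -/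
noncomputable def maxForestSize (a : Matrix (Fin n) (Fin n) ℝ) : ℕ :=
  sSup {k | ∃ F, IsOutForest a F ∧ F.card = k}

/-- The out-forest dimension: the number of trees in any maximum out-forest. -/
noncomputable def outForestDim (a : Matrix (Fin n) (Fin n) ℝ) : ℕ :=
  n - maxForestSize a

open Classical in
/-- The set of maximum out-forests. -/
noncomputable def maxForests (a : Matrix (Fin n) (Fin n) ℝ) :
    Finset (Finset (Fin n × Fin n)) :=
  Finset.univ.filter fun F => IsOutForest a F ∧ F.card = maxForestSize a

/-- The weight of a forest: the product of its arc weights. -/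
def forestWeight (a : Matrix (Fin n) (Fin n) ℝ) (F : Finset (Fin n × Fin n)) : ℝ :=
  ∏ e ∈ F, a e.2 e.1

/-- In forest `F`, vertex `i` belongs to the tree diverging from (rooted at) `j`. -/
def InTreeRootedAt (F : Finset (Fin n × Fin n)) (j i : Fin n) : Prop :=
  (∀ u, (u, j) ∉ F) ∧ Relation.ReflTransGen (fun x y => (x, y) ∈ F) j i

open Classical in
/-- The normalized matrix of maximum out-forests. -/
noncomputable def barJ (a : Matrix (Fin n) (Fin n) ℝ) : Matrix (Fin n) (Fin n) ℝ :=
  Matrix.of fun i j =>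
    (∑ F ∈ (maxForests a).filter (fun F => InTreeRootedAt F j i), forestWeight a F) /
    (∑ F ∈ maxForests a, forestWeight a F)

/-- Reachability by directed paths (arc `u → v` present iff `a v u > 0`). -/
def Reach (a : Matrix (Fin n) (Fin n) ℝ) (u v : Fin n) : Prop :=
  Relation.ReflTransGen (fun x y => 0 < a y x) u v

/-- The strong component (bicomponent) of vertex `v`. -/
def strongClass (a : Matrix (Fin n) (Fin n) ℝ) (v : Fin n) : Set (Fin n) :=
  {u | Reach a u v ∧ Reach a v u}

/-- The set of strong components. -/
def strongClasses (a : Matrix (Fin n) (Fin n) ℝ) : Set (Set (Fin n)) :=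
  {S | ∃ v, S = strongClass a v}

/-- Basis bicomponents: strong components with no arcs entering from outside. -/
def basisClasses (a : Matrix (Fin n) (Fin n) ℝ) : Set (Set (Fin n)) :=
  {S | (∃ v, S = strongClass a v) ∧ ∀ u v, u ∉ S → v ∈ S → ¬ 0 < a v u}

/-- Weak reachability (underlying undirected graph). -/
def WeakReach (a : Matrix (Fin n) (Fin n) ℝ) (u v : Fin n) : Prop :=
  Relation.ReflTransGen (fun x y => 0 < a y x ∨ 0 < a x y) u v

/-- The set of weak components. -/
def weakClasses (a : Matrix (Fin n) (Fin n) ℝ) : Set (Set (Fin n)) :=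
  {S | ∃ v, S = {u | WeakReach a u v}}

section ForestBasics

open Function

variable {n m : ℕ}

private lemma cycWalk {F : Finset (Fin n × Fin n)} {t : ℕ} (ht : 0 < t) (g : ℕ → Fin n)
    (h : ∀ s, s < t → (g s, g ((s + 1) % t)) ∈ F) :
    ∃ f : ℕ → Fin n, ∀ k, (f k, f (k + 1)) ∈ F := by
  refine ⟨fun s => g (s % t), fun k => ?_⟩
  have h2 : (k % t + 1) % t = (k + 1) % t := by
    conv_rhs => rw [Nat.add_mod]
    rw [Nat.add_mod (k % t) 1, Nat.mod_mod_of_dvd _ dvd_rfl]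
  have := h (k % t) (Nat.mod_lt _ ht)
  rwa [h2] at this

private lemma isOutForest_empty (a : Matrix (Fin n) (Fin n) ℝ) : IsOutForest a ∅ :=
  ⟨fun e he => absurd he (Finset.notMem_empty e),
   fun _ _ _ hu _ => absurd hu (Finset.notMem_empty _),
   fun ⟨_, hf⟩ => absurd (hf 0) (Finset.notMem_empty _)⟩

private lemma forest_card_le {a : Matrix (Fin n) (Fin n) ℝ} {F : Finset (Fin n × Fin n)}
    (hF : IsOutForest a F) : F.card ≤ n := by
  classical
  have hinj : Set.InjOn Prod.snd (F : Set (Fin n × Fin n)) := by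
    intro e he e' he' h
    have h1 : e.1 = e'.1 := by
      apply hF.2.1 e.1 e'.1 e.2
      · rw [Prod.mk.eta]; exact he
      · rw [h, Prod.mk.eta]; exact he'
    exact Prod.ext h1 h
  calc F.card = (F.image Prod.snd).card := (Finset.card_image_of_injOn hinj).symm
    _ ≤ (Finset.univ : Finset (Fin n)).card := Finset.card_le_univ _
    _ = n := by rw [Finset.card_univ, Fintype.card_fin]

private lemma forestSet_nonempty (a : Matrix (Fin n) (Fin n) ℝ) :
    Set.Nonempty {k | ∃ F, IsOutForest a F ∧ F.card = k} :=
  ⟨0, ∅, isOutForest_empty a, Finset.card_empty⟩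

private lemma forestSet_bdd (a : Matrix (Fin n) (Fin n) ℝ) :
    BddAbove {k | ∃ F, IsOutForest a F ∧ F.card = k} :=
  ⟨n, fun _ ⟨_, hF, hc⟩ => hc ▸ forest_card_le hF⟩

private lemma maxForestSize_le (a : Matrix (Fin n) (Fin n) ℝ) : maxForestSize a ≤ n :=
  csSup_le (forestSet_nonempty a) (fun _ ⟨_, hF, hc⟩ => hc ▸ forest_card_le hF)

private lemma card_le_maxForestSize {a : Matrix (Fin n) (Fin n) ℝ} {F : Finset (Fin n × Fin n)}
    (hF : IsOutForest a F) : F.card ≤ maxForestSize a :=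
  le_csSup (forestSet_bdd a) ⟨F, hF, rfl⟩

private lemma exists_maxForest (a : Matrix (Fin n) (Fin n) ℝ) :
    ∃ F, IsOutForest a F ∧ F.card = maxForestSize a :=
  Nat.sSup_mem (forestSet_nonempty a) (forestSet_bdd a)

private lemma forest_no_closed {a : Matrix (Fin n) (Fin n) ℝ} {F : Finset (Fin n × Fin n)}
    (hF : IsOutForest a F) {S : Finset (Fin n)} (hne : S.Nonempty)
    (hpar : ∀ v ∈ S, ∃ u, (u, v) ∈ F ∧ u ∈ S) : False := by
  classical
  have hch : ∀ v : {x // x ∈ S}, ∃ u : {x // x ∈ S}, ((u : Fin n), (v : Fin n)) ∈ F := by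
    rintro ⟨v, hv⟩
    obtain ⟨u, hu, huS⟩ := hpar v hv
    exact ⟨⟨u, huS⟩, hu⟩
  choose par hparF using hch
  obtain ⟨v0, hv0⟩ := hne
  set g : ℕ → {x // x ∈ S} := fun k => par^[k] ⟨v0, hv0⟩ with hg
  have hgF : ∀ k, ((g (k + 1) : Fin n), (g k : Fin n)) ∈ F := by
    intro k
    have h1 : g (k + 1) = par (g k) := Function.iterate_succ_apply' par k _
    rw [h1]; exact hparF (g k)
  obtain ⟨x, y, hxy, hgxy⟩ := Finite.exists_ne_map_eq_of_infinite g
  have hex : ∃ k l : ℕ, k < l ∧ g k = g l := by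
    rcases lt_or_gt_of_ne hxy with h | h
    · exact ⟨x, y, h, hgxy⟩
    · exact ⟨y, x, h, hgxy.symm⟩
  obtain ⟨k, l, hkl, hgkl⟩ := hex
  apply hF.2.2
  apply cycWalk (t := l - k) (by omega) (fun s => (g (l - s) : Fin n))
  intro s hs
  by_cases hcase : s + 1 < l - k
  · rw [Nat.mod_eq_of_lt hcase]
    have e1 : l - s - 1 + 1 = l - s := by omega
    have := hgF (l - s - 1)
    rwa [e1, show l - s - 1 = l - (s + 1) from by omega] at this
  · have hs1 : s + 1 = l - k := by omega
    rw [hs1, Nat.mod_self]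
    have e1 : l - s = k + 1 := by omega
    rw [e1, Nat.sub_zero]
    rw [← hgkl]
    exact hgF k

private lemma forest_exit {a : Matrix (Fin n) (Fin n) ℝ} {F : Finset (Fin n × Fin n)}
    (hF : IsOutForest a F) {S : Finset (Fin n)}
    (hne : S.Nonempty) (hsub : ∀ v ∈ S, ∃ u, (u, v) ∈ F) :
    ∃ i ∈ S, ∃ k, k ∉ S ∧ 0 < a i k := by
  by_contra h
  push_neg at h
  refine forest_no_closed hF hne (fun v hv => ?_)
  obtain ⟨u, hu⟩ := hsub v hv
  refine ⟨u, hu, ?_⟩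
  by_contra huS
  exact absurd (hF.1 (u, v) hu) (not_lt.mpr (h v hv u huS))

end ForestBasics
section LowerBound

open Function

variable {n : ℕ}

private lemma kirchhoff_sub_ker {a : Matrix (Fin n) (Fin n) ℝ} (hnn : ∀ i j, 0 ≤ a i j)
    (W : Finset (Fin n))
    (hW : ∀ S : Finset (Fin n), S.Nonempty → S ⊆ W → ∃ i ∈ S, ∃ k, k ∉ S ∧ 0 < a i k)
    (x : {v // v ∈ W} → ℝ)
    (hx : ((kirchhoff a).submatrix (Subtype.val : {v // v ∈ W} → Fin n) Subtype.val).mulVec x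
      = 0) : x = 0 := by
  classical
  by_contra hx0
  obtain ⟨i1, hi1⟩ : ∃ i, x i ≠ 0 := by
    by_contra h; push_neg at h; exact hx0 (funext h)
  obtain ⟨i0, -, hmax⟩ := Finset.exists_max_image Finset.univ (fun i => |x i|)
    ⟨i1, Finset.mem_univ _⟩
  have hmax' : ∀ i, |x i| ≤ |x i0| := fun i => hmax i (Finset.mem_univ i)
  have hb : 0 < |x i0| := lt_of_lt_of_le (abs_pos.mpr hi1) (hmax' i1)
  set y : {v // v ∈ W} → ℝ := if 0 < x i0 then x else -x with hy
  have hyker : ((kirchhoff a).submatrix (Subtype.val : {v // v ∈ W} → Fin n)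
      Subtype.val).mulVec y = 0 := by
    rw [hy]
    by_cases h : 0 < x i0
    · rw [if_pos h]; exact hx
    · rw [if_neg h, Matrix.mulVec_neg, hx, neg_zero]
  have hyi0 : y i0 = |x i0| := by
    rw [hy]
    by_cases h : 0 < x i0
    · rw [if_pos h]; exact (abs_of_pos h).symm
    · rw [if_neg h]; exact (abs_of_nonpos (not_lt.mp h)).symm
  have hyle : ∀ i, y i ≤ |x i0| := by
    intro i
    have h1 : y i ≤ |y i| := le_abs_self _
    have h2 : |y i| = |x i| := by
      rw [hy]; by_cases h : 0 < x i0
      · rw [if_pos h]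
      · rw [if_neg h, Pi.neg_apply, abs_neg]
    rw [h2] at h1; exact le_trans h1 (hmax' i)
  set xt : Fin n → ℝ := fun k => if h : k ∈ W then y ⟨k, h⟩ else 0 with hxt
  have hxtle : ∀ k, xt k ≤ |x i0| := by
    intro k
    rw [hxt]; dsimp only
    by_cases h : k ∈ W
    · rw [dif_pos h]; exact hyle _
    · rw [dif_neg h]; exact le_of_lt hb
  have hxty : ∀ j : {v // v ∈ W}, xt ↑j = y j := by
    intro j; rw [hxt]; dsimp only; rw [dif_pos j.2]
  set S := W.filter (fun k => xt k = |x i0|) with hS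
  have hi0S : (i0 : Fin n) ∈ S := by
    rw [hS, Finset.mem_filter]
    exact ⟨i0.2, by rw [hxty i0, hyi0]⟩
  obtain ⟨i, hiS, k, hkS, hak⟩ := hW S ⟨i0, hi0S⟩ (Finset.filter_subset _ _)
  have hiW : i ∈ W := (Finset.filter_subset _ _) hiS
  have hxti : xt i = |x i0| := (Finset.mem_filter.mp hiS).2
  have h0 : ∑ j : {v // v ∈ W}, (kirchhoff a) i (↑j) * y j = 0 := by
    have := congrFun hyker ⟨i, hiW⟩
    simpa [Matrix.mulVec, dotProduct] using this
  have h1 : ∑ j : {v // v ∈ W}, (kirchhoff a) i (↑j) * y j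
      = ∑ k' ∈ W, (kirchhoff a) i k' * xt k' := by
    rw [← Finset.sum_coe_sort W (fun k' => (kirchhoff a) i k' * xt k')]
    exact Finset.sum_congr rfl (fun j _ => by rw [hxty j])
  have h2 : ∑ k' ∈ W, (kirchhoff a) i k' * xt k'
      = ∑ k' ∈ Finset.univ, (kirchhoff a) i k' * xt k' := by
    apply Finset.sum_subset (Finset.subset_univ W)
    intro k' _ hk'
    rw [hxt]; dsimp only; rw [dif_neg hk', mul_zero]
  have h3 : ∑ k' ∈ (Finset.univ : Finset (Fin n)), (kirchhoff a) i k' * xt k'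
      = (kirchhoff a) i i * xt i
        + ∑ k' ∈ Finset.univ.erase i, (kirchhoff a) i k' * xt k' :=
    (Finset.add_sum_erase _ _ (Finset.mem_univ i)).symm
  have hdiag : (kirchhoff a) i i = ∑ k' ∈ Finset.univ.erase i, a i k' := by
    simp [kirchhoff]
  have hoff : ∀ k' ∈ Finset.univ.erase i, (kirchhoff a) i k' = -a i k' := by
    intro k' hk'
    have : i ≠ k' := (Finset.ne_of_mem_erase hk').symm
    simp [kirchhoff, this]
  have heq : (∑ k' ∈ Finset.univ.erase i, a i k') * |x i0|
      + ∑ k' ∈ Finset.univ.erase i, (-a i k') * xt k' = 0 := by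
    rw [← hxti]
    calc (∑ k' ∈ Finset.univ.erase i, a i k') * xt i
          + ∑ k' ∈ Finset.univ.erase i, (-a i k') * xt k'
        = (kirchhoff a) i i * xt i
          + ∑ k' ∈ Finset.univ.erase i, (kirchhoff a) i k' * xt k' := by
          rw [hdiag]
          congr 1
          exact Finset.sum_congr rfl (fun k' hk' => by rw [hoff k' hk'])
      _ = 0 := by rw [← h3, ← h2, ← h1, h0]
  have key : ∑ k' ∈ Finset.univ.erase i, a i k' * (|x i0| - xt k') = 0 := by
    have e1 : ∀ k' ∈ Finset.univ.erase i,
        a i k' * (|x i0| - xt k') = a i k' * |x i0| + (-a i k') * xt k' :=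
      fun k' _ => by ring
    rw [Finset.sum_congr rfl e1, Finset.sum_add_distrib, ← Finset.sum_mul]
    exact heq
  have hall := (Finset.sum_eq_zero_iff_of_nonneg (fun k' _ =>
    mul_nonneg (hnn i k') (sub_nonneg.mpr (hxtle k')))).mp key
  have hki : k ≠ i := fun h => hkS (h ▸ hiS)
  have hk0 := hall k (Finset.mem_erase.mpr ⟨hki, Finset.mem_univ k⟩)
  have hxtk : xt k = |x i0| := by
    rcases mul_eq_zero.mp hk0 with h | h
    · exact absurd h (ne_of_gt hak)
    · linarith [sub_eq_zero.mp h]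
  have hkW : k ∈ W := by
    by_contra h
    rw [hxt] at hxtk
    dsimp only at hxtk
    rw [dif_neg h] at hxtk
    exact absurd hxtk.symm (ne_of_gt hb)
  exact hkS (by rw [hS, Finset.mem_filter]; exact ⟨hkW, hxtk⟩)

private lemma kirchhoff_sub_det {a : Matrix (Fin n) (Fin n) ℝ} (hnn : ∀ i j, 0 ≤ a i j)
    (W : Finset (Fin n))
    (hW : ∀ S : Finset (Fin n), S.Nonempty → S ⊆ W → ∃ i ∈ S, ∃ k, k ∉ S ∧ 0 < a i k) :
    ((kirchhoff a).submatrix (Subtype.val : {v // v ∈ W} → Fin n) Subtype.val).det ≠ 0 := by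
  classical
  intro h
  obtain ⟨v, hv, hmv⟩ := Matrix.exists_mulVec_eq_zero_iff.mpr h
  exact hv (kirchhoff_sub_ker hnn W hW v hmv)

private lemma rank_submatrix_le_gen {α β : Type*} [Fintype α] [Fintype β]
    [DecidableEq α] [DecidableEq β]
    (A : Matrix (Fin n) (Fin n) ℝ) (f : α → Fin n) (g : β → Fin n) :
    (A.submatrix f g).rank ≤ A.rank := by
  classical
  have hrep : A.submatrix f g =
      ((1 : Matrix (Fin n) (Fin n) ℝ).submatrix f id) * A
        * ((1 : Matrix (Fin n) (Fin n) ℝ).submatrix id g) := by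
    ext i j
    simp [Matrix.mul_apply, Matrix.one_apply, ite_mul, mul_ite, Finset.sum_ite_eq,
      Finset.sum_ite_eq']
  rw [hrep]
  exact le_trans (Matrix.rank_mul_le_left _ _) (Matrix.rank_mul_le_right _ _)

private lemma rank_ge {a : Matrix (Fin n) (Fin n) ℝ} (hnn : ∀ i j, 0 ≤ a i j) :
    maxForestSize a ≤ (kirchhoff a).rank := by
  classical
  obtain ⟨F, hF, hcard⟩ := exists_maxForest a
  set W := F.image Prod.snd with hWdef
  have hinj : Set.InjOn Prod.snd (F : Set (Fin n × Fin n)) := by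
    intro e he e' he' h
    have h1 : e.1 = e'.1 := by
      apply hF.2.1 e.1 e'.1 e.2
      · rw [Prod.mk.eta]; exact he
      · rw [h, Prod.mk.eta]; exact he'
    exact Prod.ext h1 h
  have hWcard : W.card = maxForestSize a := by
    rw [hWdef, Finset.card_image_of_injOn hinj]; exact hcard
  have hW : ∀ S : Finset (Fin n), S.Nonempty → S ⊆ W → ∃ i ∈ S, ∃ k, k ∉ S ∧ 0 < a i k := by
    intro S hne hsub
    apply forest_exit hF hne
    intro v hv
    obtain ⟨e, heF, he2⟩ := Finset.mem_image.mp (hsub hv)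
    exact ⟨e.1, by rw [← he2, Prod.mk.eta]; exact heF⟩
  have hdet := kirchhoff_sub_det hnn W hW
  have hunit : IsUnit ((kirchhoff a).submatrix (Subtype.val : {v // v ∈ W} → Fin n)
      Subtype.val) :=
    (Matrix.isUnit_iff_isUnit_det _).mpr (isUnit_iff_ne_zero.mpr hdet)
  calc maxForestSize a = W.card := hWcard.symm
    _ = Fintype.card {v // v ∈ W} := (Fintype.card_coe W).symm
    _ = ((kirchhoff a).submatrix (Subtype.val : {v // v ∈ W} → Fin n) Subtype.val).rank :=
        (Matrix.rank_of_isUnit _ hunit).symm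
    _ ≤ (kirchhoff a).rank := rank_submatrix_le_gen _ _ _

end LowerBound
section Cancellation

open Function Equiv

variable {n m : ℕ}

private noncomputable def Gent (a : Matrix (Fin n) (Fin n) ℝ) (r c : Fin m → Fin n)
    (i jc : Fin m) (k : Fin n) : ℝ :=
  if r i = c jc then (if k = r i then 0 else a (r i) k)
  else (if k = c jc then -a (r i) k else 0)

private lemma entry_expand (a : Matrix (Fin n) (Fin n) ℝ) (r c : Fin m → Fin n)
    (i jc : Fin m) :
    (kirchhoff a).submatrix r c i jc = ∑ k, Gent a r c i jc k := by
  unfold Gent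
  rw [Matrix.submatrix_apply]
  show (if r i = c jc then ∑ k ∈ Finset.univ.erase (r i), a (r i) k else -a (r i) (c jc)) = _
  by_cases h : r i = c jc
  · rw [if_pos h]
    simp only [if_pos h]
    rw [← Finset.sum_erase Finset.univ
      (f := fun k => if k = r i then (0 : ℝ) else a (r i) k) (if_pos rfl)]
    exact Finset.sum_congr rfl (fun k hk => by rw [if_neg (Finset.ne_of_mem_erase hk)])
  · rw [if_neg h]
    simp only [if_neg h]
    rw [Finset.sum_ite_eq' Finset.univ (c jc) (fun k => -a (r i) k)]
    simp

private lemma det_expand (a : Matrix (Fin n) (Fin n) ℝ) (r c : Fin m → Fin n) :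
    ((kirchhoff a).submatrix r c).det =
      ∑ p : Fin m → Fin n, ∑ σ : Equiv.Perm (Fin m),
        ((Equiv.Perm.sign σ : ℤ) : ℝ) * ∏ i, Gent a r c i (σ i) (p i) := by
  classical
  rw [← Matrix.det_transpose, Matrix.det_apply']
  have h1 : ∀ σ : Equiv.Perm (Fin m),
      ∏ i, Matrix.transpose ((kirchhoff a).submatrix r c) (σ i) i
        = ∑ p ∈ Fintype.piFinset (fun _ : Fin m => (Finset.univ : Finset (Fin n))),
            ∏ i, Gent a r c i (σ i) (p i) := by
    intro σ
    rw [← Finset.prod_univ_sum]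
    exact Finset.prod_congr rfl (fun i _ => by
      rw [Matrix.transpose_apply, entry_expand])
  rw [Finset.sum_congr rfl (fun σ _ => by rw [h1 σ, Finset.mul_sum])]
  rw [Finset.sum_comm]
  simp only [Fintype.piFinset_univ]

private lemma sum_perm_zero (a : Matrix (Fin n) (Fin n) ℝ) (r c : Fin m → Fin n)
    (hc : Function.Injective c)
    (p : Fin m → Fin n) (hgood : ∀ i, p i ≠ r i)
    (t : ℕ) (ht : 2 ≤ t) (j : ℕ → Fin m)
    (hmod : ∀ s s', j s = j s' → s % t = s' % t)
    (hper : ∀ s, j (s % t) = j s)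
    (hcyc : ∀ s, p (j (s + 1)) = r (j s)) :
    ∑ σ : Equiv.Perm (Fin m), ((Equiv.Perm.sign σ : ℤ) : ℝ)
      * ∏ i, Gent a r c i (σ i) (p i) = 0 := by
  classical
  set l : List (Fin m) := List.ofFn (fun s : Fin t => j s) with hl
  have hlen : l.length = t := by rw [hl, List.length_ofFn]
  have hjinj : ∀ u u', u < t → u' < t → j u = j u' → u = u' := by
    intro u u' hu hu' h
    have := hmod u u' h
    rwa [Nat.mod_eq_of_lt hu, Nat.mod_eq_of_lt hu'] at this
  have hnodup : l.Nodup := by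
    rw [hl, List.nodup_ofFn]
    intro s s' h
    exact Fin.ext (hjinj s s' s.2 s'.2 h)
  have hgetAll : ∀ (u : ℕ) (hu : u < l.length), l[u]'hu = j u := by
    intro u hu
    simp only [hl, List.getElem_ofFn]
  have hmem : ∀ s : ℕ, j s ∈ l := by
    intro s
    rw [← hper s, hl, List.mem_ofFn]
    exact ⟨⟨s % t, Nat.mod_lt _ (by omega)⟩, rfl⟩
  have hmem' : ∀ x ∈ l, ∃ s, x = j s := by
    intro x hx
    rw [hl, List.mem_ofFn] at hx
    obtain ⟨s, hs⟩ := hx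
    exact ⟨s, hs.symm⟩
  set τ : Equiv.Perm (Fin m) := l.formPerm with hτ
  have hmodadd : ∀ s : ℕ, (s % t + 1) % t = (s + 1) % t := by
    intro s
    conv_rhs => rw [Nat.add_mod]
    rw [Nat.add_mod (s % t) 1, Nat.mod_mod_of_dvd _ dvd_rfl]
  have htau : ∀ s, τ (j s) = j (s + 1) := by
    intro s
    have hlt : s % t < l.length := by rw [hlen]; exact Nat.mod_lt _ (by omega)
    have h1 := List.formPerm_apply_getElem l hnodup (s % t) hlt
    rw [hgetAll, hgetAll] at h1
    rw [hτ, ← hper s, h1, hlen, hmodadd s, hper]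
  have htau' : ∀ s, τ⁻¹ (j (s + 1)) = j s := by
    intro s
    rw [← htau s, Equiv.Perm.inv_def, Equiv.symm_apply_apply]
  have hfix : ∀ x, x ∉ l → τ x = x := fun x hx => List.formPerm_apply_of_notMem hx
  have hfix' : ∀ x, x ∉ l → τ⁻¹ x = x := by
    intro x hx
    have h1 : τ⁻¹ (τ x) = x := τ.symm_apply_apply x
    rw [hfix x hx] at h1
    exact h1
  have hsign : Equiv.Perm.sign τ = -(-1) ^ t := by
    have hcyc' : τ.IsCycle := List.isCycle_formPerm hnodup (by rw [hlen]; exact ht)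
    rw [hcyc'.sign, List.support_formPerm_of_nodup l hnodup (fun x h => by
      have := congrArg List.length h
      rw [hlen] at this
      simp at this
      omega)]
    rw [List.toFinset_card_of_nodup hnodup, hlen]
  have hperiodic : ∀ s, j (s + t) = j s := by
    intro s
    rw [← hper (s + t), Nat.add_mod_right, hper]
  have hsucc : ∀ (Q : Fin m → Prop), (∀ s, Q (j (s + 1))) → ∀ s, Q (j s) := by
    intro Q h s
    have e : j s = j (s + t - 1 + 1) := by
      rw [show s + t - 1 + 1 = s + t from by omega, hperiodic]
    rw [e]
    exact h _
  have htne : ∀ s, j (s + 1) ≠ j s := by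
    intro s h
    have := hmod _ _ h
    have hdvd := (Nat.ModEq.dvd (show s ≡ s + 1 [MOD t] from this.symm))
    have h1 : ((s : ℤ) + 1 - s) = 1 := by ring
    rw [Nat.cast_add, Nat.cast_one, h1] at hdvd
    have := Int.le_of_dvd one_pos hdvd
    omega
  set Diag : Equiv.Perm (Fin m) → Prop := fun σ => ∀ s, r (j s) = c (σ (j s)) with hDiag
  set Offd : Equiv.Perm (Fin m) → Prop := fun σ => ∀ s, c (σ (j s)) = p (j s) with hOffd
  set f : Equiv.Perm (Fin m) → ℝ := fun σ =>
    ((Equiv.Perm.sign σ : ℤ) : ℝ) * ∏ i, Gent a r c i (σ i) (p i) with hf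
  -- (A)
  have hA : ∀ σ, Diag σ → Offd (σ * τ⁻¹) ∧ ¬ Diag (σ * τ⁻¹) := by
    intro σ hD
    have hO : Offd (σ * τ⁻¹) := by
      rw [hOffd]
      apply hsucc (fun x => c ((σ * τ⁻¹) x) = p x)
      intro s
      rw [Equiv.Perm.mul_apply, htau' s, ← hD s, hcyc s]
    refine ⟨hO, fun hD' => ?_⟩
    have h1 := hD' 1
    have h2 := hO 1
    rw [← h1] at h2
    exact hgood (j 1) (h2.symm ▸ rfl : p (j 1) = r (j 1)) |>.elim
  -- (B)
  have hB : ∀ σ, Offd σ → Diag (σ * τ) ∧ ¬ Offd (σ * τ) := by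
    intro σ hO
    have hD : Diag (σ * τ) := by
      rw [hDiag]
      intro s
      rw [Equiv.Perm.mul_apply, htau s, hO (s + 1), hcyc s]
    refine ⟨hD, fun hO' => ?_⟩
    have h1 := hD 0
    have h2 := hO' 0
    rw [← h1] at h2
    exact hgood (j 0) h2.symm
  -- (C) nonzero → Diag ∨ Offd
  have hC : ∀ σ : Equiv.Perm (Fin m),
      (∏ i, Gent a r c i (σ i) (p i)) ≠ 0 → Diag σ ∨ Offd σ := by
    intro σ hne
    have hfac : ∀ i, Gent a r c i (σ i) (p i) ≠ 0 := by
      intro i hi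
      exact hne (Finset.prod_eq_zero (Finset.mem_univ i) hi)
    have hpt : ∀ i, r i = c (σ i) ∨ p i = c (σ i) := by
      intro i
      by_cases h : r i = c (σ i)
      · exact Or.inl h
      · right
        have := hfac i
        unfold Gent at this
        rw [if_neg h] at this
        by_cases h2 : p i = c (σ i)
        · exact h2
        · rw [if_neg h2] at this; exact absurd rfl this
    set D : ℕ → Prop := fun s => r (j s) = c (σ (j s)) with hDdef
    have hDper : ∀ s s', s % t = s' % t → (D s ↔ D s') := by
      intro s s' h
      have hjj : j s = j s' := by rw [← hper s, ← hper s', h]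
      simp only [hDdef, hjj]
    have hstep : ∀ s, D s → D (s + 1) := by
      intro s hDs
      by_contra hDs1
      have h2 : p (j (s + 1)) = c (σ (j (s + 1))) := (hpt (j (s + 1))).resolve_left hDs1
      have h3 : c (σ (j (s + 1))) = c (σ (j s)) := by
        rw [← h2, hcyc s, hDs]
      have h4 : j (s + 1) = j s := σ.injective (hc h3)
      exact htne s h4
    by_cases h0 : ∃ s0, D s0
    · left
      obtain ⟨s0, hs0⟩ := h0
      have hind : ∀ u, D (s0 + u) := by
        intro u
        induction u with
        | zero => exact hs0
        | succ v ih => exact hstep (s0 + v) ih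
      intro s
      have hq := Nat.div_add_mod s0 t
      have hmlt : s0 % t < t := Nat.mod_lt _ (by omega)
      have hmul : t * (s0 / t + 1) = t * (s0 / t) + t := by ring
      have e : s0 + (t - s0 % t + s % t) = t * (s0 / t + 1) + s % t := by omega
      have hD1 := hind (t - s0 % t + s % t)
      rw [show s0 + (t - s0 % t + s % t) = t * (s0 / t + 1) + s % t from e] at hD1
      have hmodeq : (t * (s0 / t + 1) + s % t) % t = s % t := by
        rw [Nat.mul_add_mod, Nat.mod_mod_of_dvd _ dvd_rfl]
      exact (hDper _ _ hmodeq).mp hD1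
    · right
      push_neg at h0
      intro s
      exact ((hpt (j s)).resolve_left (h0 s)).symm
  -- product flips
  have hprodflip : ∀ (σ σ' : Equiv.Perm (Fin m)),
      (∀ x, x ∉ l → σ' x = σ x) →
      (∀ i, i ∈ l → Gent a r c i (σ' i) (p i) = - Gent a r c i (σ i) (p i)) →
      (∏ i, Gent a r c i (σ' i) (p i)) = (-1) ^ t * ∏ i, Gent a r c i (σ i) (p i) := by
    intro σ σ' hout hin
    rw [← Finset.prod_mul_prod_compl l.toFinset (fun i => Gent a r c i (σ' i) (p i)),
        ← Finset.prod_mul_prod_compl l.toFinset (fun i => Gent a r c i (σ i) (p i))]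
    have h1 : ∏ i ∈ l.toFinset, Gent a r c i (σ' i) (p i)
        = (-1) ^ t * ∏ i ∈ l.toFinset, Gent a r c i (σ i) (p i) := by
      rw [Finset.prod_congr rfl (fun i hi => hin i (List.mem_toFinset.mp hi))]
      rw [show (fun i => - Gent a r c i (σ i) (p i)) = fun i => (-1) * Gent a r c i (σ i) (p i)
        from funext (fun i => by ring)]
      rw [Finset.prod_mul_distrib, Finset.prod_const,
        List.toFinset_card_of_nodup hnodup, hlen]
    have h2 : ∏ i ∈ l.toFinsetᶜ, Gent a r c i (σ' i) (p i)
        = ∏ i ∈ l.toFinsetᶜ, Gent a r c i (σ i) (p i) :=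
      Finset.prod_congr rfl (fun i hi => by
        rw [hout i (fun h => (Finset.mem_compl.mp hi) (List.mem_toFinset.mpr h))])
    rw [h1, h2]
    ring
  -- factor analysis: Diag case
  have hDfac : ∀ σ, Diag σ → ∀ i ∈ l, Gent a r c i ((σ * τ⁻¹) i) (p i)
      = - Gent a r c i (σ i) (p i) := by
    intro σ hD i hi
    obtain ⟨s, rfl⟩ := hmem' i hi
    -- write j s = j (s' + 1)
    have e : j s = j (s + t - 1 + 1) := by
      rw [show s + t - 1 + 1 = s + t from by omega, hperiodic]
    rw [e]
    set s' := s + t - 1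
    have hd : r (j (s' + 1)) = c (σ (j (s' + 1))) := hD (s' + 1)
    have hcval : c ((σ * τ⁻¹) (j (s' + 1))) = p (j (s' + 1)) := by
      rw [Equiv.Perm.mul_apply, htau' s', ← hD s', hcyc s']
    have h1 : Gent a r c (j (s' + 1)) (σ (j (s' + 1))) (p (j (s' + 1)))
        = a (r (j (s' + 1))) (p (j (s' + 1))) := by
      unfold Gent
      rw [if_pos hd, if_neg (hgood _)]
    have h2 : Gent a r c (j (s' + 1)) ((σ * τ⁻¹) (j (s' + 1))) (p (j (s' + 1)))
        = - a (r (j (s' + 1))) (p (j (s' + 1))) := by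
      unfold Gent
      rw [if_neg (fun h => hgood (j (s' + 1)) (by rw [← hcval, ← h])), if_pos hcval.symm]
    rw [h1, h2]
  -- factor analysis: Offd case
  have hOfac : ∀ σ, Offd σ → ∀ i ∈ l, Gent a r c i ((σ * τ) i) (p i)
      = - Gent a r c i (σ i) (p i) := by
    intro σ hO i hi
    obtain ⟨s, rfl⟩ := hmem' i hi
    have ho : c (σ (j s)) = p (j s) := hO s
    have hcval : c ((σ * τ) (j s)) = r (j s) := by
      rw [Equiv.Perm.mul_apply, htau s, hO (s + 1), hcyc s]
    have h1 : Gent a r c (j s) (σ (j s)) (p (j s)) = - a (r (j s)) (p (j s)) := by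
      unfold Gent
      rw [if_neg (fun h => hgood (j s) (by rw [← ho, ← h])), if_pos ho.symm]
    have h2 : Gent a r c (j s) ((σ * τ) (j s)) (p (j s)) = a (r (j s)) (p (j s)) := by
      unfold Gent
      rw [if_pos hcval.symm, if_neg (hgood _)]
    rw [h1, h2]
    ring
  -- sign coercion helper
  have hsignmul : ∀ σ : Equiv.Perm (Fin m), ∀ υ : Equiv.Perm (Fin m),
      Equiv.Perm.sign υ = -(-1) ^ t →
      ((Equiv.Perm.sign (σ * υ) : ℤ) : ℝ) = ((Equiv.Perm.sign σ : ℤ) : ℝ) * (-(-1) ^ t) := by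
    intro σ υ hυ
    rw [Equiv.Perm.sign_mul, hυ]
    push_cast
    ring
  have hsigninv : Equiv.Perm.sign τ⁻¹ = -(-1) ^ t := by
    rw [Equiv.Perm.sign_inv, hsign]
  -- f flips
  have hDflip : ∀ σ, Diag σ → f (σ * τ⁻¹) = - f σ := by
    intro σ hD
    rw [hf]
    dsimp only
    rw [hsignmul σ τ⁻¹ hsigninv]
    rw [hprodflip σ (σ * τ⁻¹)
      (fun x hx => by rw [Equiv.Perm.mul_apply, hfix' x hx]) (hDfac σ hD)]
    have h2 : ((-1 : ℝ)) ^ t * (-1) ^ t = 1 := by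
      rw [← mul_pow]; norm_num
    linear_combination (-(((Equiv.Perm.sign σ : ℤ) : ℝ)
      * ∏ i, Gent a r c i (σ i) (p i))) * h2
  have hOflip : ∀ σ, Offd σ → f (σ * τ) = - f σ := by
    intro σ hO
    rw [hf]
    dsimp only
    rw [hsignmul σ τ hsign]
    rw [hprodflip σ (σ * τ)
      (fun x hx => by rw [Equiv.Perm.mul_apply, hfix x hx]) (hOfac σ hO)]
    have h2 : ((-1 : ℝ)) ^ t * (-1) ^ t = 1 := by
      rw [← mul_pow]; norm_num
    linear_combination (-(((Equiv.Perm.sign σ : ℤ) : ℝ)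
      * ∏ i, Gent a r c i (σ i) (p i))) * h2
  -- the involution
  set g : Equiv.Perm (Fin m) → Equiv.Perm (Fin m) := fun σ =>
    if Diag σ then σ * τ⁻¹ else if Offd σ then σ * τ else σ with hg
  have htau_ne_one : τ ≠ 1 := by
    intro h
    have := htau 0
    rw [h] at this
    simp at this
    exact htne 0 this.symm
  have hg1 : ∀ σ, f σ + f (g σ) = 0 := by
    intro σ
    rw [hg]
    dsimp only
    by_cases hD : Diag σ
    · rw [if_pos hD, hDflip σ hD]; ring
    · rw [if_neg hD]
      by_cases hO : Offd σ
      · rw [if_pos hO, hOflip σ hO]; ring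
      · rw [if_neg hO]
        have hzero : f σ = 0 := by
          by_contra hne
          have : (∏ i, Gent a r c i (σ i) (p i)) ≠ 0 := by
            intro h
            apply hne
            rw [hf]; dsimp only; rw [h, mul_zero]
          rcases hC σ this with h | h
          · exact hD h
          · exact hO h
        rw [hzero]; ring
  have hg2 : ∀ σ, f σ ≠ 0 → g σ ≠ σ := by
    intro σ hne
    rw [hg]
    dsimp only
    by_cases hD : Diag σ
    · rw [if_pos hD]
      intro h
      apply htau_ne_one
      have h2 : σ * τ⁻¹ = σ * 1 := by rw [mul_one]; exact h
      exact inv_eq_one.mp (mul_left_cancel h2)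
    · rw [if_neg hD]
      by_cases hO : Offd σ
      · rw [if_pos hO]
        intro h
        apply htau_ne_one
        have h2 : σ * τ = σ * 1 := by rw [mul_one]; exact h
        exact mul_left_cancel h2
      · exfalso
        apply hne
        have : (∏ i, Gent a r c i (σ i) (p i)) = 0 := by
          by_contra h
          rcases hC σ h with h' | h'
          · exact hD h'
          · exact hO h'
        rw [hf]; dsimp only; rw [this, mul_zero]
  have hg3 : ∀ σ, g (g σ) = σ := by
    intro σ
    rw [hg]
    dsimp only
    by_cases hD : Diag σ
    · rw [if_pos hD]
      obtain ⟨hO', hD'⟩ := hA σ hD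
      rw [if_neg hD', if_pos hO']
      group
    · rw [if_neg hD]
      by_cases hO : Offd σ
      · rw [if_pos hO]
        obtain ⟨hD', hO'⟩ := hB σ hO
        rw [if_pos hD']
        group
      · rw [if_neg hO, if_neg hD, if_neg hO]
  exact Finset.sum_ninvolution g hg1 hg2 (fun σ => Finset.mem_univ _) hg3

end Cancellation
section UpperBound

open Function Matrix

variable {n m : ℕ}

private lemma exists_cycle {a : Matrix (Fin n) (Fin n) ℝ} (r : Fin m → Fin n)
    (hr : Injective r) (p : Fin m → Fin n) (hm : maxForestSize a < m)
    (hpos : ∀ i, 0 < a (r i) (p i)) (hgood : ∀ i, p i ≠ r i) :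
    ∃ (t : ℕ) (j : ℕ → Fin m), 2 ≤ t ∧ (∀ s s', j s = j s' → s % t = s' % t)
      ∧ (∀ s, j (s % t) = j s) ∧ (∀ s, p (j (s + 1)) = r (j s)) := by
  classical
  set F : Finset (Fin n × Fin n) := Finset.image (fun i => (p i, r i)) Finset.univ with hF
  have hpairinj : Injective (fun i : Fin m => (p i, r i)) := by
    intro i i' h
    exact hr (congrArg Prod.snd h)
  have hcard : F.card = m := by
    rw [hF, Finset.card_image_of_injective _ hpairinj, Finset.card_univ, Fintype.card_fin]
  have hnotforest : ¬ IsOutForest a F := by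
    intro h
    have := card_le_maxForestSize h
    omega
  have h1 : ∀ e ∈ F, 0 < a e.2 e.1 := by
    intro e he
    rw [hF] at he
    obtain ⟨i, -, hi⟩ := Finset.mem_image.mp he
    rw [← hi]
    exact hpos i
  have h2 : ∀ u u' v : Fin n, (u, v) ∈ F → (u', v) ∈ F → u = u' := by
    intro u u' v hu hu'
    rw [hF] at hu hu'
    obtain ⟨i, -, hi⟩ := Finset.mem_image.mp hu
    obtain ⟨i', -, hi'⟩ := Finset.mem_image.mp hu'
    have hri : r i = v := congrArg Prod.snd hi
    have hri' : r i' = v := congrArg Prod.snd hi'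
    have : i = i' := hr (by rw [hri, hri'])
    have hui : p i = u := congrArg Prod.fst hi
    have hui' : p i' = u' := congrArg Prod.fst hi'
    rw [← hui, ← hui', this]
  have h3 : ∃ f : ℕ → Fin n, ∀ k, (f k, f (k + 1)) ∈ F := by
    by_contra h3
    exact hnotforest ⟨h1, h2, h3⟩
  obtain ⟨w, hw⟩ := h3
  have hIex : ∀ k, ∃ i : Fin m, p i = w k ∧ r i = w (k + 1) := by
    intro k
    have hk := hw k
    rw [hF] at hk
    obtain ⟨i, -, hi⟩ := Finset.mem_image.mp hk
    have hu1 : p i = w k := congrArg Prod.fst hi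
    have hu2 : r i = w (k + 1) := congrArg Prod.snd hi
    exact ⟨i, hu1, hu2⟩
  choose I hIp hIr using hIex
  have hstep : ∀ k, p (I (k + 1)) = r (I k) := fun k => by rw [hIp, hIr]
  obtain ⟨x, y, hxy, hg⟩ := Finite.exists_ne_map_eq_of_infinite I
  have hP : ∃ d, 0 < d ∧ ∃ k, I k = I (k + d) := by
    rcases lt_or_gt_of_ne hxy with h | h
    · exact ⟨y - x, by omega, x, by rw [show x + (y - x) = y from by omega]; exact hg⟩
    · exact ⟨x - y, by omega, y, by rw [show y + (x - y) = x from by omega]; exact hg.symm⟩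
  obtain ⟨t, htpos, k0, hk0, hmin⟩ : ∃ t, 0 < t ∧ ∃ k0, I k0 = I (k0 + t)
      ∧ ∀ d, 0 < d → d < t → ∀ k, I k ≠ I (k + d) := by
    refine ⟨Nat.find hP, (Nat.find_spec hP).1, ?_⟩
    obtain ⟨-, k0, hk0⟩ := Nat.find_spec hP
    refine ⟨k0, hk0, ?_⟩
    intro d hd hdt k hIk
    exact Nat.find_min hP hdt ⟨hd, k, hIk⟩
  have hminI : ∀ u u', u < t → u' < t → I (k0 + u) = I (k0 + u') → u = u' := by
    intro u u' hu hu' h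
    by_contra hne
    rcases lt_or_gt_of_ne hne with hlt | hlt
    · exact hmin (u' - u) (by omega) (by omega) (k0 + u)
        (by rw [show k0 + u + (u' - u) = k0 + u' from by omega]; exact h)
    · exact hmin (u - u') (by omega) (by omega) (k0 + u')
        (by rw [show k0 + u' + (u - u') = k0 + u from by omega]; exact h.symm)
  have ht2 : 2 ≤ t := by
    by_contra hlt
    have ht1 : t = 1 := by omega
    have h4 := hstep k0
    rw [show k0 + 1 = k0 + t from by omega] at h4
    rw [← hk0] at h4
    exact hgood (I k0) h4
  set j : ℕ → Fin m := fun s => I (k0 + s % t) with hj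
  have hper : ∀ s, j (s % t) = j s := by
    intro s
    rw [hj]
    dsimp only
    rw [Nat.mod_mod_of_dvd _ dvd_rfl]
  have hmod : ∀ s s', j s = j s' → s % t = s' % t := fun s s' h =>
    hminI _ _ (Nat.mod_lt _ htpos) (Nat.mod_lt _ htpos) h
  have hcyc : ∀ s, p (j (s + 1)) = r (j s) := by
    intro s
    rw [hj]
    dsimp only
    have h1mod : (s + 1) % t = (s % t + 1) % t := by
      conv_lhs => rw [Nat.add_mod]
      rw [Nat.add_mod (s % t) 1, Nat.mod_mod_of_dvd _ dvd_rfl]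
    have hlt : s % t < t := Nat.mod_lt _ htpos
    by_cases hcase : s % t + 1 < t
    · rw [h1mod, Nat.mod_eq_of_lt hcase, show k0 + (s % t + 1) = (k0 + s % t) + 1 from by omega]
      exact hstep (k0 + s % t)
    · have he : s % t + 1 = t := by omega
      rw [h1mod, he, Nat.mod_self, Nat.add_zero, hk0,
        show k0 + t = (k0 + s % t) + 1 from by omega]
      exact hstep (k0 + s % t)
  exact ⟨t, j, ht2, hmod, hper, hcyc⟩

private lemma det_submatrix_zero {a : Matrix (Fin n) (Fin n) ℝ} (hnn : ∀ i j, 0 ≤ a i j)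
    (hm : maxForestSize a < m) (r c : Fin m → Fin n)
    (hr : Injective r) (hc : Injective c) :
    ((kirchhoff a).submatrix r c).det = 0 := by
  classical
  rw [det_expand]
  apply Finset.sum_eq_zero
  intro p _
  by_cases hgp : ∀ i, p i ≠ r i ∧ 0 < a (r i) (p i)
  · obtain ⟨t, j, ht, hmod, hper, hcyc⟩ := exists_cycle r hr p hm
      (fun i => (hgp i).2) (fun i => (hgp i).1)
    exact sum_perm_zero a r c hc p (fun i => (hgp i).1) t ht j hmod hper hcyc
  · push_neg at hgp
    obtain ⟨i0, hi0⟩ := hgp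
    apply Finset.sum_eq_zero
    intro σ _
    have hfac : Gent a r c i0 (σ i0) (p i0) = 0 := by
      unfold Gent
      by_cases h1 : p i0 = r i0
      · by_cases h2 : r i0 = c (σ i0)
        · rw [if_pos h2, if_pos h1]
        · rw [if_neg h2]
          by_cases h3 : p i0 = c (σ i0)
          · exact absurd (h1.symm.trans h3) h2
          · rw [if_neg h3]
      · have ha0 : a (r i0) (p i0) = 0 :=
          le_antisymm (hi0 h1) (hnn _ _)
        by_cases h2 : r i0 = c (σ i0)
        · rw [if_pos h2, if_neg h1, ha0]
        · rw [if_neg h2]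
          by_cases h3 : p i0 = c (σ i0)
          · rw [if_pos h3, ha0, neg_zero]
          · rw [if_neg h3]
    rw [Finset.prod_eq_zero (Finset.mem_univ i0) hfac, mul_zero]

private lemma exists_indep_cols {M N : Type*} [Fintype M] [Fintype N] [DecidableEq N]
    (A : Matrix M N ℝ) (k : ℕ) (hk : k ≤ A.rank) :
    ∃ cc : Fin k → N, Injective cc ∧ LinearIndependent ℝ (fun s => Aᵀ (cc s)) := by
  classical
  obtain ⟨b, hb_sub, hb_span, hb_ind⟩ := exists_linearIndependent ℝ (Set.range Aᵀ)
  have hbfin : b.Finite := Set.Finite.subset (Set.finite_range Aᵀ) hb_sub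
  haveI := hbfin.fintype
  have hcard : k ≤ b.toFinset.card := by
    have h1 : A.rank = Module.finrank ℝ (Submodule.span ℝ b) := by
      rw [Matrix.rank_eq_finrank_span_cols, Matrix.col, ← hb_span]
    have h2 : Module.finrank ℝ (Submodule.span ℝ b) = b.toFinset.card :=
      finrank_span_set_eq_card hb_ind
    omega
  obtain ⟨u, hu_sub, hu_card⟩ := Finset.exists_subset_card_eq hcard
  set e := (Finset.equivFinOfCardEq hu_card).symm with he
  have hmemb : ∀ s : Fin k, ((e s : {x // x ∈ u}) : M → ℝ) ∈ b := by
    intro s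
    have h1 : ((e s : {x // x ∈ u}) : M → ℝ) ∈ u := (e s).2
    have h2 := hu_sub h1
    rwa [Set.mem_toFinset] at h2
  have hmemr : ∀ s, ((e s : {x // x ∈ u}) : M → ℝ) ∈ Set.range Aᵀ := fun s => hb_sub (hmemb s)
  choose cc hcc using hmemr
  refine ⟨cc, ?_, ?_⟩
  · intro s s' h
    have h1 : ((e s : {x // x ∈ u}) : M → ℝ) = ((e s' : {x // x ∈ u}) : M → ℝ) := by
      rw [← hcc, ← hcc, h]
    exact e.injective (Subtype.ext h1)
  · have hfun : (fun s => Aᵀ (cc s))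
        = (fun s : Fin k => ((⟨(e s : {x // x ∈ u}), hmemb s⟩ : b) : M → ℝ)) := by
      funext s
      rw [hcc s]
    rw [hfun]
    apply hb_ind.comp
    intro s s' h
    apply e.injective
    apply Subtype.ext
    exact congrArg (Subtype.val : {y // y ∈ b} → (M → ℝ)) h

private lemma rank_eq_of_indep {M : Type*} [Fintype M] {k : ℕ} (A : Matrix M (Fin k) ℝ)
    (hA : LinearIndependent ℝ (fun s => Aᵀ s)) : A.rank = k := by
  rw [Matrix.rank_eq_finrank_span_cols]
  have h1 : Module.finrank ℝ (Submodule.span ℝ (Set.range Aᵀ)) = Fintype.card (Fin k) :=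
    finrank_span_eq_card hA
  rw [Matrix.col, h1, Fintype.card_fin]

private lemma exists_nonsing_submatrix (A : Matrix (Fin n) (Fin n) ℝ) {k : ℕ}
    (hk : k ≤ A.rank) :
    ∃ r c : Fin k → Fin n, Injective r ∧ Injective c ∧ (A.submatrix r c).det ≠ 0 := by
  classical
  obtain ⟨cc, hccinj, hccind⟩ := exists_indep_cols A k hk
  set B := A.submatrix id cc with hB
  have hBrank : B.rank = k := by
    apply rank_eq_of_indep
    exact hccind
  obtain ⟨rr, hrrinj, hrrind⟩ := exists_indep_cols Bᵀ k (by rw [Matrix.rank_transpose, hBrank])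
  set C := Bᵀ.submatrix id rr with hC
  have hCrank : C.rank = k := by
    apply rank_eq_of_indep
    exact hrrind
  have hCdet : C.det ≠ 0 := by
    intro h
    obtain ⟨v, hv, hmv⟩ := Matrix.exists_mulVec_eq_zero_iff.mpr h
    apply hv
    have hker : LinearMap.ker C.mulVecLin = ⊥ := by
      have h1 := LinearMap.finrank_range_add_finrank_ker C.mulVecLin
      have h2 : Module.finrank ℝ (Fin k → ℝ) = k := by
        rw [Module.finrank_pi, Fintype.card_fin]
      rw [h2] at h1
      have h3 : Module.finrank ℝ (LinearMap.range C.mulVecLin) = k := hCrank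
      have h4 : Module.finrank ℝ (LinearMap.ker C.mulVecLin) = 0 := by omega
      exact Submodule.finrank_eq_zero.mp h4
    have hv0 : v ∈ LinearMap.ker C.mulVecLin := by
      rw [LinearMap.mem_ker, Matrix.mulVecLin_apply]
      exact hmv
    rw [hker, Submodule.mem_bot] at hv0
    exact hv0
  refine ⟨rr, cc, hrrinj, hccinj, ?_⟩
  have heq : A.submatrix rr cc = Cᵀ := by
    ext i j
    rw [hC, hB]
    simp [Matrix.submatrix_apply, Matrix.transpose_apply]
  rw [heq, Matrix.det_transpose]
  exact hCdet

end UpperBound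
/-- The rank of the Kirchhoff matrix of a weighted digraph on `n` vertices
equals `n − d`, where `d` is the out-forest dimension. -/
theorem kirchhoff_rank_eq {n : ℕ} (a : Matrix (Fin n) (Fin n) ℝ)
    (hnn : ∀ i j, 0 ≤ a i j) :
    (kirchhoff a).rank = n - outForestDim a := by
  classical
  have hle_n : maxForestSize a ≤ n := maxForestSize_le a
  have h1 : n - outForestDim a = maxForestSize a := by
    unfold outForestDim
    omega
  rw [h1]
  apply le_antisymm
  · by_contra h
    push_neg at h
    obtain ⟨r, c, hr, hc, hdet⟩ :=
      exists_nonsing_submatrix (kirchhoff a) (k := maxForestSize a + 1) (by omega)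
    exact hdet (det_submatrix_zero hnn (by omega) r c hr hc)
  · exact rank_ge hnn
end

section
/- Zero is a simple eigenvalue of the Kirchhoff matrix L of a weighted digraph Γ if and only if Γ has a spanning diverging tree (equivalently, Γ has exactly one basis bicomponent). -/
open Finset

variable {n : ℕ}

section Lemmas
variable {n : ℕ} {a : Matrix (Fin n) (Fin n) ℝ}

lemma Reach.trans {u v w : Fin n} (h : Reach a u v) (h' : Reach a v w) : Reach a u w :=
  Relation.ReflTransGen.trans h h'

lemma reach_single {u v : Fin n} (h : 0 < a v u) : Reach a u v :=
  Relation.ReflTransGen.single h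

lemma Reach.refl (u : Fin n) : Reach a u u := Relation.ReflTransGen.refl

lemma mem_strongClass_self (u : Fin n) : u ∈ strongClass a u := ⟨Reach.refl u, Reach.refl u⟩

lemma strongClass_eq_of_mem {u v : Fin n} (h : u ∈ strongClass a v) :
    strongClass a u = strongClass a v := by
  obtain ⟨huv, hvu⟩ := h
  ext z
  exact ⟨fun ⟨h1, h2⟩ => ⟨h1.trans huv, hvu.trans h2⟩,
    fun ⟨h1, h2⟩ => ⟨h1.trans hvu, huv.trans h2⟩⟩

/-- A basis class is closed under incoming arcs. -/
lemma basis_closed {S : Set (Fin n)} (hS : S ∈ basisClasses a) {x w : Fin n}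
    (hx : x ∈ S) (hw : 0 < a x w) : w ∈ S := by
  by_contra h
  exact hS.2 w x h hx hw

/-- A basis class is closed under reachability "from". -/
lemma basis_closed_reach {S : Set (Fin n)} (hS : S ∈ basisClasses a) {x w : Fin n}
    (hx : x ∈ S) (hw : Reach a w x) : w ∈ S := by
  induction hw using Relation.ReflTransGen.head_induction_on with
  | refl => exact hx
  | head h' _ ih => exact basis_closed hS ih h'

/-- Any nonempty set closed under "reaches" contains a vertex whose strong class
is a basis class. -/
lemma exists_basis_class_in (U : Finset (Fin n)) (hU : U.Nonempty)
    (hclosed : ∀ u ∈ U, ∀ w, Reach a w u → w ∈ U) :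
    ∃ u ∈ U, strongClass a u ∈ basisClasses a := by
  classical
  obtain ⟨u, huU, humin⟩ := Finset.exists_min_image U
    (fun u => (Finset.univ.filter (fun z => Reach a z u)).card) hU
  refine ⟨u, huU, ⟨u, rfl⟩, ?_⟩
  intro w x hw hx hwx
  apply hw
  have hxu : Reach a x u := hx.1
  have hwu : Reach a w u := (reach_single hwx).trans hxu
  have hwU : w ∈ U := hclosed u huU w hwu
  have hsub : (Finset.univ.filter (fun z => Reach a z w)) ⊆
      (Finset.univ.filter (fun z => Reach a z u)) := by
    intro z hz
    simp only [Finset.mem_filter, Finset.mem_univ, true_and] at hz ⊢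
    exact hz.trans hwu
  have hcard := humin w hwU
  have heq := Finset.eq_of_subset_of_card_le hsub (by omega)
  have : u ∈ (Finset.univ.filter (fun z => Reach a z w)) := by
    rw [heq]; simp [Reach.refl]
  have huw : Reach a u w := by simpa using this
  exact ⟨hwu, huw⟩

/-- If `r` reaches every vertex then its strong class is a basis class. -/
lemma strongClass_root_basis {r : Fin n} (hr : ∀ v, Reach a r v) :
    strongClass a r ∈ basisClasses a := by
  refine ⟨⟨r, rfl⟩, ?_⟩
  intro w x hw hx hwx
  apply hw
  exact ⟨(reach_single hwx).trans hx.1, hr w⟩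

/-- If `r` reaches every vertex then the only basis class is its strong class. -/
lemma basisClasses_eq_of_root {r : Fin n} (hr : ∀ v, Reach a r v) :
    basisClasses a = {strongClass a r} := by
  ext S
  simp only [Set.mem_singleton_iff]
  constructor
  · rintro hS
    obtain ⟨⟨v, rfl⟩, -⟩ := id hS
    have hrS : r ∈ strongClass a v := basis_closed_reach hS (mem_strongClass_self v) (hr v)
    exact (strongClass_eq_of_mem hrS).symm
  · rintro rfl
    exact strongClass_root_basis hr

/-- Without a global root there are two distinct basis classes. -/
lemma exists_two_basis (hn : 0 < n) (h : ¬ ∃ r, ∀ v, Reach a r v) :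
    ∃ S T, S ∈ basisClasses a ∧ T ∈ basisClasses a ∧ S ≠ T := by
  classical
  obtain ⟨u1, -, hu1⟩ := exists_basis_class_in Finset.univ
    (Finset.univ_nonempty_iff.2 ⟨⟨0, hn⟩⟩) (fun _ _ _ _ => Finset.mem_univ _)
  push_neg at h
  obtain ⟨w, hw⟩ := h u1
  have hcl : ∀ u ∈ (Finset.univ.filter (fun u => ¬ Reach a u1 u)), ∀ z, Reach a z u →
      z ∈ (Finset.univ.filter (fun u => ¬ Reach a u1 u)) := by
    intro u hu z hz
    simp only [Finset.mem_filter, Finset.mem_univ, true_and] at hu ⊢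
    intro hru
    exact hu (hru.trans hz)
  obtain ⟨u2, hu2U, hu2⟩ := exists_basis_class_in
    (Finset.univ.filter (fun u => ¬ Reach a u1 u)) ⟨w, by simpa using hw⟩ hcl
  refine ⟨strongClass a u1, strongClass a u2, hu1, hu2, ?_⟩
  intro hEq
  have : u2 ∈ strongClass a u1 := hEq ▸ mem_strongClass_self u2
  simp only [Finset.mem_filter] at hu2U
  exact hu2U.2 this.2

end Lemmas
section Forest
variable {n : ℕ} {a : Matrix (Fin n) (Fin n) ℝ}

/-- An infinite reverse walk in a forest yields a contradiction. -/
lemma no_rev_walk {F : Finset (Fin n × Fin n)} (hF : IsOutForest a F) :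
    ¬ ∃ g : ℕ → Fin n, ∀ k, (g (k + 1), g k) ∈ F := by
  rintro ⟨g, hg⟩
  obtain ⟨i', j', hne, hEq⟩ := Finite.exists_ne_map_eq_of_infinite g
  set i := min i' j' with hi
  set j := max i' j' with hj
  have hij : i < j := by
    rcases lt_or_gt_of_ne hne with h | h
    · simpa [hi, hj, min_eq_left h.le, max_eq_right h.le] using h
    · simpa [hi, hj, min_eq_right h.le, max_eq_left h.le] using h
  have hgij : g i = g j := by
    rcases le_total i' j' with h | h
    · simp [hi, hj, min_eq_left h, max_eq_right h, hEq]
    · simp [hi, hj, min_eq_right h, max_eq_left h, hEq]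
  set d := j - i with hd
  have hd0 : 0 < d := by omega
  set idx : ℕ → ℕ := fun k => Nat.rec 0 (fun _ m => if m + 1 = d then 0 else m + 1) k with hidx
  have hidx0 : idx 0 = 0 := rfl
  have hidxsucc : ∀ k, idx (k + 1) = if idx k + 1 = d then 0 else idx k + 1 := fun k => rfl
  have hlt : ∀ k, idx k < d := by
    intro k
    induction k with
    | zero => simpa [hidx0] using hd0
    | succ k ih =>
      rw [hidxsucc]
      split
      · exact hd0
      · omega
  apply hF.2.2
  refine ⟨fun k => g (j - idx k), fun k => ?_⟩
  show (g (j - idx k), g (j - idx (k + 1))) ∈ F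
  rw [hidxsucc k]
  split
  · rename_i h
    have h1 : j - idx k = i + 1 := by omega
    have h2 : (j - 0) = j := by omega
    rw [h1, h2, ← hgij]
    exact hg i
  · have h1 : j - idx k = (j - (idx k + 1)) + 1 := by
      have := hlt k; omega
    rw [h1]
    exact hg _

/-- From a set where every element has a parent inside the set, build a reverse walk. -/
lemma exists_rev_walk {F : Finset (Fin n × Fin n)} {C : Set (Fin n)}
    (hC : ∀ v ∈ C, ∃ u ∈ C, (u, v) ∈ F) {v0 : Fin n} (hv0 : v0 ∈ C) :
    ∃ g : ℕ → Fin n, ∀ k, (g (k + 1), g k) ∈ F := by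
  have hstep : ∀ x : {v // v ∈ C}, ∃ y : {v // v ∈ C}, (y.1, x.1) ∈ F := by
    rintro ⟨x, hx⟩
    obtain ⟨u, hu, huF⟩ := hC x hx
    exact ⟨⟨u, hu⟩, huF⟩
  choose G hG using hstep
  refine ⟨fun k => (G^[k] ⟨v0, hv0⟩).1, fun k => ?_⟩
  show ((G^[k + 1] ⟨v0, hv0⟩).1, (G^[k] ⟨v0, hv0⟩).1) ∈ F
  rw [Function.iterate_succ_apply' G k _]
  exact hG _

/-- A spanning out-tree has a root reaching every vertex. -/
lemma tree_root (hn : 0 < n) {F : Finset (Fin n × Fin n)} (hF : IsOutForest a F)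
    (hcard : F.card = n - 1) : ∃ r, ∀ v, Reach a r v := by
  classical
  have hinj : Set.InjOn Prod.snd (F : Set (Fin n × Fin n)) := by
    intro e1 h1 e2 h2 h
    have := hF.2.1 e1.1 e2.1 e1.2 (by simpa using h1) (by rw [h]; simpa using h2)
    exact Prod.ext this h
  have hcard2 : (F.image Prod.snd).card = n - 1 := by
    rw [Finset.card_image_of_injOn hinj, hcard]
  set R : Finset (Fin n) := Finset.univ \ F.image Prod.snd with hR
  have hcardR : R.card = 1 := by
    rw [hR, Finset.card_sdiff_of_subset (Finset.subset_univ _), hcard2, Finset.card_univ,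
      Fintype.card_fin]
    omega
  obtain ⟨r, hr⟩ := Finset.card_eq_one.mp hcardR
  have hroot : ∀ v, (∀ u, (u, v) ∉ F) → v = r := by
    intro v hv
    have : v ∈ R := by
      rw [hR]
      simp only [Finset.mem_sdiff, Finset.mem_univ, true_and, Finset.mem_image]
      rintro ⟨e, he, rfl⟩
      exact hv e.1 (by simpa using he)
    rw [hr] at this
    simpa using this
  refine ⟨r, fun v => ?_⟩
  by_contra hv
  -- the set of vertices not tree-reachable from r is closed under parents
  have hC : ∀ w ∈ {w | ¬ Relation.ReflTransGen (fun x y => (x, y) ∈ F) r w},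
      ∃ u ∈ {w | ¬ Relation.ReflTransGen (fun x y => (x, y) ∈ F) r w}, (u, w) ∈ F := by
    intro w hw
    simp only [Set.mem_setOf_eq] at hw ⊢
    have hwne : w ≠ r := by
      rintro rfl
      exact hw Relation.ReflTransGen.refl
    have : ∃ u, (u, w) ∈ F := by
      by_contra h
      push_neg at h
      exact hwne (hroot w h)
    obtain ⟨u, hu⟩ := this
    refine ⟨u, fun hru => hw (hru.tail hu), hu⟩
  have hvC : v ∈ {w | ¬ Relation.ReflTransGen (fun x y => (x, y) ∈ F) r w} := by
    intro h
    exact hv (Relation.ReflTransGen.mono (fun x y hxy => hF.1 (x, y) hxy) _ _ h)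
  have := exists_rev_walk hC (v0 := v) hvC
  exact no_rev_walk hF this
  
/-- A global root gives a spanning out-tree. -/
lemma root_tree {r : Fin n} (hr : ∀ v, Reach a r v) :
    ∃ F, IsOutForest a F ∧ F.card = n - 1 := by
  classical
  -- reachability in exactly ≤ k steps
  let reachN : ℕ → Fin n → Prop := fun k => Nat.rec (fun v => v = r)
    (fun _ P v => P v ∨ ∃ u, P u ∧ 0 < a v u) k
  have hreach : ∀ v, Reach a r v → ∃ k, reachN k v := by
    intro v hv
    induction hv with
    | refl => exact ⟨0, rfl⟩
    | tail _ harc ih =>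
      obtain ⟨k, hk⟩ := ih
      exact ⟨k + 1, Or.inr ⟨_, hk, harc⟩⟩
  have hex : ∀ v, ∃ k, reachN k v := fun v => hreach v (hr v)
  let d : Fin n → ℕ := fun v => @Nat.find _ (fun _ => Classical.propDecidable _) (hex v)
  have hd : ∀ v, reachN (d v) v := fun v => @Nat.find_spec _ (fun _ => Classical.propDecidable _) (hex v)
  have hd0 : ∀ v, v ≠ r → 0 < d v := by
    intro v hvr
    rcases Nat.eq_zero_or_pos (d v) with h | h
    · exact absurd (h ▸ hd v : reachN 0 v) hvr
    · exact h
  have hparent : ∀ v, ∃ u, v ≠ r → (0 < a v u ∧ d u < d v) := by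
    intro v
    by_cases hvr : v = r
    · exact ⟨r, fun h => absurd hvr h⟩
    · have h1 : 0 < d v := hd0 v hvr
      have h2 : reachN (d v - 1 + 1) v := by
        rw [Nat.sub_add_cancel h1]; exact hd v
      rcases h2 with h | ⟨u, hu, hau⟩
      · exact absurd h (@Nat.find_min _ (fun _ => Classical.propDecidable _) (hex v) _ (show d v - 1 < d v by omega))
      · refine ⟨u, fun _ => ⟨hau, ?_⟩⟩
        have h3 : d u ≤ d v - 1 := @Nat.find_min' _ (fun _ => Classical.propDecidable _) (hex u) _ hu
        show d u < d v
        omega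
  choose p hp using hparent
  classical
  refine ⟨(Finset.univ.erase r).image (fun v => (p v, v)), ⟨?_, ?_, ?_⟩, ?_⟩
  · rintro e he
    simp only [Finset.mem_image, Finset.mem_erase, Finset.mem_univ, and_true] at he
    obtain ⟨v, hv, rfl⟩ := he
    exact (hp v hv).1
  · intro u u' v hu hu'
    simp only [Finset.mem_image, Finset.mem_erase, Finset.mem_univ, and_true,
      Prod.mk.injEq] at hu hu'
    obtain ⟨w, hw, rfl, rfl⟩ := hu
    obtain ⟨w', hw', h1, h2⟩ := hu'
    rw [← h2, h1]
  · rintro ⟨f, hf⟩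
    have hmono : ∀ k, d (f k) < d (f (k + 1)) := by
      intro k
      have hfk := hf k
      simp only [Finset.mem_image, Finset.mem_erase, Finset.mem_univ, and_true,
        Prod.mk.injEq] at hfk
      obtain ⟨w, hw, h1, h2⟩ := hfk
      subst h2
      rw [← h1]
      exact (hp _ hw).2
    have hsm : StrictMono (fun k => d (f k)) := strictMono_nat_of_lt_succ hmono
    obtain ⟨i', j', hne, hEq⟩ := Finite.exists_ne_map_eq_of_infinite f
    exact absurd (congrArg d hEq) (hsm.injective.ne hne)
  · rw [Finset.card_image_of_injective _ (fun x y h => (Prod.mk.injEq _ _ _ _ ▸ h).2),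
      Finset.card_erase_of_mem (Finset.mem_univ r), Finset.card_univ, Fintype.card_fin]

end Forest
section LinAlg
open Matrix
variable {n : ℕ} {a : Matrix (Fin n) (Fin n) ℝ}

lemma kirchhoff_mulVec_apply (a : Matrix (Fin n) (Fin n) ℝ) (x : Fin n → ℝ) (i : Fin n) :
    (kirchhoff a *ᵥ x) i = ∑ k ∈ Finset.univ.erase i, a i k * (x i - x k) := by
  classical
  simp only [Matrix.mulVec, dotProduct, kirchhoff, Matrix.of_apply]
  rw [← Finset.sum_erase_add Finset.univ _ (Finset.mem_univ i), if_pos rfl]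
  have h1 : ∑ j ∈ Finset.univ.erase i,
      (if i = j then (∑ k ∈ Finset.univ.erase i, a i k) else -a i j) * x j
      = ∑ j ∈ Finset.univ.erase i, -(a i j * x j) :=
    Finset.sum_congr rfl (fun j hj => by
      rw [if_neg (Ne.symm (Finset.ne_of_mem_erase hj))]; ring)
  rw [h1, Finset.sum_mul, ← Finset.sum_add_distrib]
  exact Finset.sum_congr rfl fun k _ => by ring

lemma kirchhoff_mulVec_one (a : Matrix (Fin n) (Fin n) ℝ) :
    kirchhoff a *ᵥ (fun _ => (1 : ℝ)) = 0 := by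
  funext i
  rw [kirchhoff_mulVec_apply]
  simp

lemma max_step (hnn : ∀ i j, 0 ≤ a i j) {x : Fin n → ℝ} {i : Fin n}
    (hL : (kirchhoff a *ᵥ x) i = 0) (hmax : ∀ k, x k ≤ x i) {w : Fin n}
    (hw : 0 < a i w) : x w = x i := by
  classical
  rw [kirchhoff_mulVec_apply] at hL
  by_cases hwi : w = i
  · rw [hwi]
  · have hmem : w ∈ Finset.univ.erase i := by simp [hwi]
    have hterm : a i w * (x i - x w) = 0 :=
      (Finset.sum_eq_zero_iff_of_nonneg
        (fun k _ => mul_nonneg (hnn i k) (sub_nonneg.2 (hmax k)))).mp hL w hmem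
    rcases mul_eq_zero.mp hterm with h | h
    · exact absurd h (ne_of_gt hw)
    · linarith [sub_eq_zero.mp h]

lemma eq_of_reach_max (hnn : ∀ i j, 0 ≤ a i j) {x : Fin n → ℝ}
    (hx : kirchhoff a *ᵥ x = 0) {i : Fin n} (hmax : ∀ k, x k ≤ x i)
    {r : Fin n} (hreach : Reach a r i) : x r = x i := by
  induction hreach using Relation.ReflTransGen.head_induction_on with
  | refl => rfl
  | head h' _ ih =>
    rename_i z c _
    have hc : ∀ k, x k ≤ x c := fun k => ih ▸ hmax k
    exact (max_step hnn (congrFun hx c) hc h').trans ih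

lemma mulVec_zero_constant (hnn : ∀ i j, 0 ≤ a i j) {r : Fin n}
    (hroot : ∀ v, Reach a r v) {x : Fin n → ℝ} (hx : kirchhoff a *ᵥ x = 0)
    (v : Fin n) : x v = x r := by
  classical
  obtain ⟨i, -, hi⟩ := Finset.exists_max_image Finset.univ x ⟨r, Finset.mem_univ r⟩
  obtain ⟨j, -, hj⟩ := Finset.exists_min_image Finset.univ x ⟨r, Finset.mem_univ r⟩
  have hmax : ∀ k, x k ≤ x i := fun k => hi k (Finset.mem_univ k)
  have hmin : ∀ k, x j ≤ x k := fun k => hj k (Finset.mem_univ k)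
  have h1 : x r = x i := eq_of_reach_max hnn hx hmax (hroot i)
  have hxneg : kirchhoff a *ᵥ (-x) = 0 := by rw [Matrix.mulVec_neg, hx, neg_zero]
  have h2 : (-x) r = (-x) j :=
    eq_of_reach_max hnn hxneg (fun k => neg_le_neg (hmin k)) (hroot j)
  have h2' : x r = x j := by simpa using h2
  have h3 := hmax v
  have h4 := hmin v
  linarith

lemma kirchhoff_sq_ker (hnn : ∀ i j, 0 ≤ a i j) {r : Fin n}
    (hroot : ∀ v, Reach a r v) {y : Fin n → ℝ}
    (h : kirchhoff a *ᵥ (kirchhoff a *ᵥ y) = 0) : kirchhoff a *ᵥ y = 0 := by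
  classical
  set x := kirchhoff a *ᵥ y with hxdef
  have hconst : ∀ v, x v = x r := mulVec_zero_constant hnn hroot h
  obtain ⟨i, -, hi⟩ := Finset.exists_max_image Finset.univ y ⟨r, Finset.mem_univ r⟩
  obtain ⟨j, -, hj⟩ := Finset.exists_min_image Finset.univ y ⟨r, Finset.mem_univ r⟩
  have hge : 0 ≤ x i := by
    rw [hxdef, kirchhoff_mulVec_apply]
    exact Finset.sum_nonneg fun k _ =>
      mul_nonneg (hnn i k) (sub_nonneg.2 (hi k (Finset.mem_univ k)))
  have hle : x j ≤ 0 := by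
    rw [hxdef, kirchhoff_mulVec_apply]
    exact Finset.sum_nonpos fun k _ =>
      mul_nonpos_of_nonneg_of_nonpos (hnn j k) (sub_nonpos.2 (hj k (Finset.mem_univ k)))
  have hxr : x r = 0 := by
    have := hconst i; have := hconst j; linarith
  funext v
  rw [hconst v, hxr]; rfl

lemma charpoly_transpose (M : Matrix (Fin n) (Fin n) ℝ) : Mᵀ.charpoly = M.charpoly := by
  rw [Matrix.charpoly, Matrix.charpoly, ← Matrix.det_transpose (Matrix.charmatrix M)]
  congr 1
  ext i j
  by_cases h : i = j
  · subst h; simp [Matrix.charmatrix_apply_eq, Matrix.transpose_apply]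
  · rw [Matrix.transpose_apply, Matrix.charmatrix_apply_ne _ _ _ h,
      Matrix.charmatrix_apply_ne _ _ _ (Ne.symm h), Matrix.transpose_apply]

lemma charpoly_toLin' (M : Matrix (Fin n) (Fin n) ℝ) :
    LinearMap.charpoly (Matrix.toLin' M) = M.charpoly := by
  rw [← LinearMap.charpoly_toMatrix (Matrix.toLin' M) (Pi.basisFun ℝ (Fin n))]
  congr 1
  rw [LinearMap.toMatrix_eq_toMatrix', LinearMap.toMatrix'_toLin']

lemma maxGenEigenspace_zero_eq_ker (φ : Module.End ℝ (Fin n → ℝ))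
    (h2 : ∀ y, φ (φ y) = 0 → φ y = 0) :
    Module.End.maxGenEigenspace φ 0 = LinearMap.ker φ := by
  have hpow : ∀ k (x : Fin n → ℝ), (φ ^ (k + 1)) x = 0 → φ x = 0 := by
    intro k
    induction k with
    | zero => intro x h; simpa [pow_one] using h
    | succ k ih =>
      intro x h
      have h' : (φ ^ (k + 1)) (φ x) = 0 := by
        rw [← Module.End.mul_apply, ← pow_succ]; exact h
      exact h2 x (ih (φ x) h')
  ext x
  rw [Module.End.mem_maxGenEigenspace]
  simp only [zero_smul, sub_zero, LinearMap.mem_ker]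
  constructor
  · rintro ⟨k, hk⟩
    cases k with
    | zero =>
      have : x = 0 := by simpa using hk
      rw [this, map_zero]
    | succ k => exact hpow k x hk
  · intro h; exact ⟨1, by simpa [pow_one] using h⟩

lemma rootMult_eq (a : Matrix (Fin n) (Fin n) ℝ) :
    Polynomial.rootMultiplicity 0 (kirchhoff a).charpoly
      = Module.finrank ℝ (Module.End.maxGenEigenspace (Matrix.toLin' (kirchhoff a)) 0) := by
  rw [Polynomial.rootMultiplicity_eq_natTrailingDegree', ← charpoly_toLin',
    ← LinearMap.finrank_maxGenEigenspace_zero_eq]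

lemma mult_one_of_root (hn : 0 < n) (hnn : ∀ i j, 0 ≤ a i j) {r : Fin n}
    (hroot : ∀ v, Reach a r v) :
    Polynomial.rootMultiplicity 0 (kirchhoff a).charpoly = 1 := by
  rw [rootMult_eq]
  set φ := Matrix.toLin' (kirchhoff a) with hφdef
  have hφ : ∀ x, φ x = kirchhoff a *ᵥ x := fun x => Matrix.toLin'_apply _ x
  have h2 : ∀ y, φ (φ y) = 0 → φ y = 0 := by
    intro y h
    rw [hφ] at *
    rw [hφ y] at h
    exact kirchhoff_sq_ker hnn hroot h
  rw [maxGenEigenspace_zero_eq_ker φ h2]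
  have hker : LinearMap.ker φ = Submodule.span ℝ {(fun _ => (1:ℝ) : Fin n → ℝ)} := by
    ext x
    simp only [LinearMap.mem_ker, hφ, Submodule.mem_span_singleton]
    constructor
    · intro hx
      refine ⟨x r, funext fun v => ?_⟩
      have := mulVec_zero_constant hnn hroot hx v
      simp [this]
    · rintro ⟨c, rfl⟩
      rw [Matrix.mulVec_smul, kirchhoff_mulVec_one, smul_zero]
  rw [hker, finrank_span_singleton]
  intro h
  have := congrFun h ⟨0, hn⟩
  simp at this

end LinAlg
section Null
open Matrix
variable {n : ℕ} {a : Matrix (Fin n) (Fin n) ℝ}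

lemma exists_left_null (hnn : ∀ i j, 0 ≤ a i j) {S : Set (Fin n)}
    (hS : S ∈ basisClasses a) :
    ∃ x : Fin n → ℝ, x ≠ 0 ∧ (∀ i, x i ≠ 0 → i ∈ S) ∧ x ᵥ* kirchhoff a = 0 := by
  classical
  obtain ⟨⟨v, hv⟩, hbasis⟩ := hS
  have hvS : v ∈ S := hv ▸ mem_strongClass_self v
  set T : Finset (Fin n) := Finset.univ.filter (· ∈ S) with hT
  have hmemT : ∀ i, i ∈ T ↔ i ∈ S := by intro i; simp [hT]
  have hzero : ∀ i k, i ∈ S → k ∉ S → a i k = 0 := fun i k hi hk =>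
    le_antisymm (not_lt.mp (hbasis k i hk hi)) (hnn i k)
  set B : Matrix {x // x ∈ T} {x // x ∈ T} ℝ :=
    Matrix.of (fun i j => kirchhoff a i.1 j.1) with hB
  have hrow : B *ᵥ (fun _ => (1 : ℝ)) = 0 := by
    funext i
    have hiS : i.1 ∈ S := (hmemT i.1).mp i.2
    show (∑ j : {x // x ∈ T}, B i j * 1) = 0
    simp only [mul_one]
    have hsub : (∑ j : {x // x ∈ T}, B i j) = ∑ j ∈ T, kirchhoff a i.1 j := by
      simp only [hB, Matrix.of_apply]
      exact (Finset.sum_subtype (p := fun x => x ∈ T) T (fun x => Iff.rfl)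
        (fun j => kirchhoff a i.1 j)).symm
    rw [hsub, ← Finset.sum_erase_add T _ i.2]
    have hdiag : kirchhoff a i.1 i.1 = ∑ k ∈ T.erase i.1, a i.1 k := by
      show (if i.1 = i.1 then _ else _) = _
      rw [if_pos rfl]
      apply (Finset.sum_subset ?_ ?_).symm
      · intro k hk
        simp only [Finset.mem_erase] at hk ⊢
        exact ⟨hk.1, Finset.mem_univ k⟩
      · intro k hk1 hk2
        simp only [Finset.mem_erase, hmemT, not_and] at hk1 hk2
        exact hzero i.1 k hiS (fun hkS => hk2 hk1.1 hkS)
    have hoff : ∑ j ∈ T.erase i.1, kirchhoff a i.1 j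
        = ∑ j ∈ T.erase i.1, -a i.1 j := by
      refine Finset.sum_congr rfl fun j hj => ?_
      show (if i.1 = j then _ else _) = _
      rw [if_neg (Ne.symm (Finset.ne_of_mem_erase hj))]
    rw [hdiag, hoff]
    simp [← Finset.sum_add_distrib]
  have hBdet : B.det = 0 := by
    rw [← Matrix.exists_mulVec_eq_zero_iff]
    refine ⟨fun _ => 1, ?_, hrow⟩
    intro h
    have := congrFun h ⟨v, (hmemT v).mpr hvS⟩
    simp at this
  obtain ⟨w, hw0, hwB⟩ := Matrix.exists_vecMul_eq_zero_iff.mpr hBdet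
  refine ⟨fun i => if h : i ∈ T then w ⟨i, h⟩ else 0, ?_, ?_, ?_⟩
  · obtain ⟨j, hj⟩ := Function.ne_iff.mp hw0
    intro h
    have := congrFun h j.1
    simp only [dif_pos j.2] at this
    exact hj (by simpa using this)
  · intro i hi
    by_cases h : i ∈ T
    · exact (hmemT i).mp h
    · simp [dif_neg h] at hi
  · funext k
    show (∑ i, (if h : i ∈ T then w ⟨i, h⟩ else 0) * kirchhoff a i k) = 0
    rw [← Finset.sum_subset (Finset.subset_univ T)
      (fun i _ hi => by rw [dif_neg hi, zero_mul])]
    by_cases hk : k ∈ T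
    · calc (∑ i ∈ T, (if h : i ∈ T then w ⟨i, h⟩ else 0) * kirchhoff a i k)
          = ∑ i : {x // x ∈ T}, w i * B i ⟨k, hk⟩ := by
            rw [Finset.sum_subtype (p := fun x => x ∈ T) T (fun x => Iff.rfl)
              (fun i => (if h : i ∈ T then w ⟨i, h⟩ else 0) * kirchhoff a i k)]
            refine Finset.sum_congr rfl fun i _ => ?_
            rw [dif_pos i.2]
            simp [hB]
        _ = (w ᵥ* B) ⟨k, hk⟩ := rfl
        _ = 0 := by rw [hwB]; rfl
    · refine Finset.sum_eq_zero fun i hi => ?_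
      have hiS : i ∈ S := (hmemT i).mp hi
      have hkS : k ∉ S := fun h => hk ((hmemT k).mpr h)
      have hik : i ≠ k := fun h => hkS (h ▸ hiS)
      have : kirchhoff a i k = 0 := by
        show (if i = k then _ else _) = (0:ℝ)
        rw [if_neg hik, hzero i k hiS hkS, neg_zero]
      rw [this, mul_zero]

lemma mult_ge_two (hnn : ∀ i j, 0 ≤ a i j) {S T : Set (Fin n)}
    (hS : S ∈ basisClasses a) (hT : T ∈ basisClasses a) (hST : S ≠ T) :
    2 ≤ Polynomial.rootMultiplicity 0 (kirchhoff a).charpoly := by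
  classical
  rw [Polynomial.rootMultiplicity_eq_natTrailingDegree', ← charpoly_transpose,
    ← charpoly_toLin', ← LinearMap.finrank_maxGenEigenspace_zero_eq]
  obtain ⟨x1, hx10, hx1S, hx1K⟩ := exists_left_null hnn hS
  obtain ⟨x2, hx20, hx2T, hx2K⟩ := exists_left_null hnn hT
  have hdisj : ∀ i, i ∈ S → i ∉ T := by
    intro i hiS hiT
    obtain ⟨⟨u, rfl⟩, -⟩ := hS
    obtain ⟨⟨w, rfl⟩, -⟩ := hT
    exact hST ((strongClass_eq_of_mem hiS).symm.trans (strongClass_eq_of_mem hiT))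
  set φ := Matrix.toLin' (kirchhoff a)ᵀ with hφdef
  have hker : ∀ x : Fin n → ℝ, x ᵥ* kirchhoff a = 0 → φ x = 0 := by
    intro x hx
    rw [hφdef, Matrix.toLin'_apply, Matrix.mulVec_transpose, hx]
  have hmem : ∀ x : Fin n → ℝ, x ᵥ* kirchhoff a = 0 →
      x ∈ Module.End.maxGenEigenspace φ 0 := by
    intro x hx
    rw [Module.End.mem_maxGenEigenspace]
    exact ⟨1, by simpa [pow_one] using hker x hx⟩
  have hindep : LinearIndependent ℝ ![x1, x2] := by
    rw [LinearIndependent.pair_iff]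
    intro s t hstz
    obtain ⟨i, hi⟩ := Function.ne_iff.mp hx10
    obtain ⟨j, hj⟩ := Function.ne_iff.mp hx20
    have hiS : i ∈ S := hx1S i hi
    have hjT : j ∈ T := hx2T j hj
    have hx2i : x2 i = 0 := by
      by_contra h
      exact hdisj i hiS (hx2T i h)
    have hx1j : x1 j = 0 := by
      by_contra h
      exact hdisj j (hx1S j h) hjT
    have h1 := congrFun hstz i
    have h2 := congrFun hstz j
    simp only [Pi.add_apply, Pi.smul_apply, smul_eq_mul, Pi.zero_apply, hx2i, hx1j,
      mul_zero, add_zero, zero_add] at h1 h2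
    constructor
    · rcases mul_eq_zero.mp h1 with h | h
      · exact h
      · exact absurd h hi
    · rcases mul_eq_zero.mp h2 with h | h
      · exact h
      · exact absurd h hj
  have hle : Submodule.span ℝ (Set.range ![x1, x2]) ≤ Module.End.maxGenEigenspace φ 0 := by
    rw [Submodule.span_le]
    rintro y ⟨k, rfl⟩
    fin_cases k
    · exact hmem x1 hx1K
    · exact hmem x2 hx2K
  calc (2 : ℕ) = Module.finrank ℝ (Submodule.span ℝ (Set.range ![x1, x2])) := by
        rw [finrank_span_eq_card hindep]; simp
    _ ≤ Module.finrank ℝ (Module.End.maxGenEigenspace φ 0) := Submodule.finrank_mono hle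

end Null

/-- Zero is a simple eigenvalue of the Kirchhoff matrix of a weighted digraph
iff the digraph has a spanning diverging tree, equivalently, iff it has exactly
one basis bicomponent. -/
theorem zero_simple_iff_spanning_tree {n : ℕ} (hn : 0 < n) (a : Matrix (Fin n) (Fin n) ℝ)
    (hnn : ∀ i j, 0 ≤ a i j) :
    (Polynomial.rootMultiplicity 0 (kirchhoff a).charpoly = 1 ↔
      ∃ F, IsOutForest a F ∧ F.card = n - 1) ∧
    ((∃ F, IsOutForest a F ∧ F.card = n - 1) ↔ (basisClasses a).ncard = 1) := by
  constructor
  · constructor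
    · intro h1
      by_contra hF
      have hnoroot : ¬ ∃ r, ∀ v, Reach a r v := fun ⟨r, hr⟩ => hF (root_tree hr)
      obtain ⟨S, T, hS, hT, hST⟩ := exists_two_basis hn hnoroot
      have := mult_ge_two hnn hS hT hST
      omega
    · rintro ⟨F, hF, hcard⟩
      obtain ⟨r, hr⟩ := tree_root hn hF hcard
      exact mult_one_of_root hn hnn hr
  · constructor
    · rintro ⟨F, hF, hcard⟩
      obtain ⟨r, hr⟩ := tree_root hn hF hcard
      rw [basisClasses_eq_of_root hr]
      exact Set.ncard_singleton _
    · intro hcard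
      by_contra hF
      have hnoroot : ¬ ∃ r, ∀ v, Reach a r v := fun ⟨r, hr⟩ => hF (root_tree hr)
      obtain ⟨S, T, hS, hT, hST⟩ := exists_two_basis hn hnoroot
      rw [Set.ncard_eq_one] at hcard
      obtain ⟨U, hU⟩ := hcard
      rw [hU] at hS hT
      simp only [Set.mem_singleton_iff] at hS hT
      exact hST (hS.trans hT.symm)
end

section
/- If Γ has a spanning diverging tree, then for every initial condition x(0), the solution of ẋ(t) = −L x(t) converges as t → ∞ to a vector with all components equal. -/
open Finset

variable {n : ℕ}

lemma walk_of_transGen {α : Type*} {R : α → α → Prop} {x y : α} (h : Relation.TransGen R x y) :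
    ∃ (m : ℕ) (g : ℕ → α), 0 < m ∧ g 0 = x ∧ g m = y ∧ ∀ k < m, R (g k) (g (k + 1)) := by
  induction h with
  | @single b hxy =>
    refine ⟨1, fun k => if k = 0 then x else b, one_pos, by simp, by simp, ?_⟩
    intro k hk
    interval_cases k
    simpa using hxy
  | @tail b c hxb hby ih =>
    obtain ⟨m, g, hm, hg0, hgm, hstep⟩ := ih
    refine ⟨m + 1, fun k => if k ≤ m then g k else c, by omega, by simp [hm.le, hg0], by simp, ?_⟩
    intro k hk
    rcases lt_or_eq_of_le (Nat.lt_succ_iff.mp hk) with h1 | h1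
    · show R (if k ≤ m then g k else c) (if k + 1 ≤ m then g (k + 1) else c)
      rw [if_pos h1.le, if_pos (Nat.succ_le_of_lt h1)]
      exact hstep k h1
    · subst h1
      show R (if k ≤ k then g k else c) (if k + 1 ≤ k then g (k + 1) else c)
      rw [if_pos le_rfl, if_neg (by omega), hgm]
      exact hby

lemma transGen_irrefl_of_no_walk {α : Type*} {R : α → α → Prop}
    (h : ¬ ∃ f : ℕ → α, ∀ k, R (f k) (f (k + 1))) (x : α) : ¬ Relation.TransGen R x x := by
  intro hx
  obtain ⟨m, g, hm, hg0, hgm, hstep⟩ := walk_of_transGen hx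
  refine h ⟨fun k => g (k % m), fun k => ?_⟩
  have hq : k % m < m := Nat.mod_lt _ hm
  have key : g ((k % m + 1) % m) = g (k % m + 1) := by
    rcases eq_or_lt_of_le (Nat.succ_le_of_lt hq) with h1 | h1
    · rw [show k % m + 1 = m from h1, Nat.mod_self, hg0, hgm]
    · rw [Nat.mod_eq_of_lt h1]
  show R (g (k % m)) (g ((k + 1) % m))
  rw [show (k + 1) % m = (k % m + 1) % m from (Nat.mod_add_mod k m 1).symm, key]
  exact hstep _ hq

/-- Every vertex of an out-forest with `n - 1` arcs is reachable from a common root. -/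
lemma exists_root {n : ℕ} (hn : 0 < n) (a : Matrix (Fin n) (Fin n) ℝ)
    (F : Finset (Fin n × Fin n)) (hF : IsOutForest a F) (hcard : F.card = n - 1) :
    ∃ r : Fin n, ∀ i, Relation.ReflTransGen (fun u v => (u, v) ∈ F) r i := by
  obtain ⟨hpos, huniq, hnowalk⟩ := hF
  set S : Fin n → Fin n → Prop := fun u v => (u, v) ∈ F with hS
  -- well-foundedness of S
  haveI : IsTrans (Fin n) (Relation.TransGen S) := inferInstance
  haveI : IsIrrefl (Fin n) (Relation.TransGen S) :=
    ⟨fun x hx => transGen_irrefl_of_no_walk hnowalk x hx⟩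
  have hwf : WellFounded S :=
    Subrelation.wf (fun {u v} huv => Relation.TransGen.single huv)
      (Finite.wellFounded_of_trans_of_irrefl _)
  -- every vertex has a rootless ancestor
  have hanc : ∀ i : Fin n, ∃ r, (∀ u, (u, r) ∉ F) ∧ Relation.ReflTransGen S r i := by
    intro i
    induction i using WellFounded.induction hwf with
    | _ i ih =>
      by_cases hpar : ∃ u, (u, i) ∈ F
      · obtain ⟨u, hu⟩ := hpar
        obtain ⟨r, hr1, hr2⟩ := ih u hu
        exact ⟨r, hr1, hr2.tail hu⟩
      · exact ⟨i, fun u hu => hpar ⟨u, hu⟩, Relation.ReflTransGen.refl⟩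
  -- rootless vertices are unique
  have himg : (F.image Prod.snd).card = n - 1 := by
    rw [Finset.card_image_of_injOn, hcard]
    intro e he e' he' hee
    have := huniq e.1 e'.1 e.2 (by simpa using he) (by rw [hee]; simpa using he')
    exact Prod.ext this hee
  have hroot_uniq : ∀ r r' : Fin n, (∀ u, (u, r) ∉ F) → (∀ u, (u, r') ∉ F) → r = r' := by
    intro r r' hr hr'
    by_contra hne
    have hsub : F.image Prod.snd ⊆ (Finset.univ.erase r).erase r' := by
      intro v hv
      simp only [Finset.mem_image] at hv
      obtain ⟨e, he, rfl⟩ := hv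
      refine Finset.mem_erase.mpr ⟨?_, Finset.mem_erase.mpr ⟨?_, Finset.mem_univ _⟩⟩
      · rintro rfl; exact hr' e.1 (by simpa using he)
      · rintro rfl; exact hr e.1 (by simpa using he)
    have hle := Finset.card_le_card hsub
    rw [himg, Finset.card_erase_of_mem (Finset.mem_erase.mpr ⟨Ne.symm hne, Finset.mem_univ _⟩),
      Finset.card_erase_of_mem (Finset.mem_univ _), Finset.card_univ, Fintype.card_fin] at hle
    omega
  obtain ⟨r, hr1, _⟩ := hanc ⟨0, hn⟩
  refine ⟨r, fun i => ?_⟩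
  obtain ⟨r', hr1', hr2'⟩ := hanc i
  rwa [hroot_uniq r r' hr1 hr1']
section MatrixExp

attribute [local instance] Matrix.linftyOpNormedRing Matrix.linftyOpNormedAlgebra

variable {n : ℕ}

/-- Entry evaluation as a continuous linear map. -/
noncomputable def entryCLM (i j : Fin n) : Matrix (Fin n) (Fin n) ℝ →L[ℝ] ℝ :=
  LinearMap.toContinuousLinearMap
    { toFun := fun M => M i j
      map_add' := fun A B => rfl
      map_smul' := fun c A => rfl }

/-- `mulVec` by a fixed vector, as a continuous linear map in the matrix. -/
noncomputable def mulVecCLM (v : Fin n → ℝ) : Matrix (Fin n) (Fin n) ℝ →L[ℝ] (Fin n → ℝ) :=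
  LinearMap.toContinuousLinearMap
    { toFun := fun M => M.mulVec v
      map_add' := fun A B => Matrix.add_mulVec A B v
      map_smul' := fun c A => Matrix.smul_mulVec c A v }

lemma exp_entry_hasSum (M : Matrix (Fin n) (Fin n) ℝ) (i j : Fin n) :
    HasSum (fun k : ℕ => ((k.factorial : ℝ)⁻¹) * (M ^ k) i j)
      (NormedSpace.exp M i j) := by
  have h : HasSum (fun k : ℕ => ((k.factorial : ℝ)⁻¹) • M ^ k) (NormedSpace.exp M) := by
    rw [NormedSpace.exp_eq_tsum ℝ]
    exact (NormedSpace.expSeries_summable' (𝕂 := ℝ) M).hasSum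
  exact (entryCLM i j).hasSum h

lemma exp_mulVec_hasSum (M : Matrix (Fin n) (Fin n) ℝ) (v : Fin n → ℝ) :
    HasSum (fun k : ℕ => ((k.factorial : ℝ)⁻¹) • ((M ^ k).mulVec v))
      ((NormedSpace.exp M).mulVec v) := by
  have h : HasSum (fun k : ℕ => ((k.factorial : ℝ)⁻¹) • M ^ k) (NormedSpace.exp M) := by
    rw [NormedSpace.exp_eq_tsum ℝ]
    exact (NormedSpace.expSeries_summable' (𝕂 := ℝ) M).hasSum
  simpa [Matrix.smul_mulVec, mulVecCLM] using (mulVecCLM v).hasSum h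

lemma pow_entry_nonneg {M : Matrix (Fin n) (Fin n) ℝ} (hM : ∀ i j, 0 ≤ M i j) :
    ∀ (k : ℕ) (i j : Fin n), 0 ≤ (M ^ k) i j := by
  intro k
  induction k with
  | zero => intro i j; simp [Matrix.one_apply]; positivity
  | succ k ih =>
    intro i j
    rw [pow_succ, Matrix.mul_apply]
    exact Finset.sum_nonneg fun m _ => mul_nonneg (ih i m) (hM m j)

lemma exp_entry_nonneg {M : Matrix (Fin n) (Fin n) ℝ} (hM : ∀ i j, 0 ≤ M i j) (i j : Fin n) :
    0 ≤ NormedSpace.exp M i j := by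
  refine hasSum_le (fun k => ?_) hasSum_zero (exp_entry_hasSum M i j)
  exact mul_nonneg (by positivity) (pow_entry_nonneg hM k i j)

lemma exp_entry_pos {M : Matrix (Fin n) (Fin n) ℝ} (hM : ∀ i j, 0 ≤ M i j)
    {i j : Fin n} {k : ℕ} (hk : 0 < (M ^ k) i j) : 0 < NormedSpace.exp M i j := by
  have hle := le_hasSum (exp_entry_hasSum M i j) k
    (fun k' _ => mul_nonneg (by positivity) (pow_entry_nonneg hM k' i j))
  have : (0:ℝ) < ((k.factorial : ℝ)⁻¹) * (M ^ k) i j := by positivity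
  linarith

lemma exp_smul_one (u : ℝ) :
    NormedSpace.exp (u • (1 : Matrix (Fin n) (Fin n) ℝ)) = Real.exp u • 1 := by
  have h1 : u • (1 : Matrix (Fin n) (Fin n) ℝ) = algebraMap ℝ _ u :=
    (Algebra.algebraMap_eq_smul_one u).symm
  rw [h1]
  erw [← NormedSpace.algebraMap_exp_comm (𝕂 := ℝ) (𝔸 := Matrix (Fin n) (Fin n) ℝ) u]
  rw [Algebra.algebraMap_eq_smul_one, ← Real.exp_eq_exp_ℝ]

lemma exp_mulVec_one {M : Matrix (Fin n) (Fin n) ℝ} (hM : M.mulVec (fun _ => 1) = 0) :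
    (NormedSpace.exp M).mulVec (fun _ => 1) = fun _ => 1 := by
  have h := exp_mulVec_hasSum M (fun _ => 1)
  have hpow : ∀ k : ℕ, k ≠ 0 → ((k.factorial : ℝ)⁻¹) • ((M ^ k).mulVec fun _ => 1) = 0 := by
    intro k hk
    obtain ⟨k, rfl⟩ := Nat.exists_eq_succ_of_ne_zero hk
    rw [pow_succ, ← Matrix.mulVec_mulVec, hM, Matrix.mulVec_zero, smul_zero]
  have h0 : HasSum (fun k : ℕ => ((k.factorial : ℝ)⁻¹) • ((M ^ k).mulVec fun _ => 1))
      (((0:ℕ).factorial : ℝ)⁻¹ • ((M ^ 0).mulVec fun _ => 1)) :=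
    hasSum_single 0 (fun k hk => hpow k hk)
  have := h.unique h0
  rw [this]
  simp [Matrix.one_mulVec]

lemma hasDerivAt_exp_mulVec (B : Matrix (Fin n) (Fin n) ℝ) (x0 : Fin n → ℝ) (t : ℝ) :
    HasDerivAt (fun t : ℝ => (NormedSpace.exp (t • B)).mulVec x0)
      (B.mulVec ((NormedSpace.exp (t • B)).mulVec x0)) t := by
  have h := hasDerivAt_exp_smul_const' (𝕂 := ℝ) B t
  have h2 := ((mulVecCLM x0).hasFDerivAt (x := NormedSpace.exp (t • B))).comp_hasDerivAt t h
  rw [Matrix.mulVec_mulVec]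
  exact h2

end MatrixExp
lemma wsum_le_sup {n : ℕ} (hne : (Finset.univ : Finset (Fin n)).Nonempty)
    (p w : Fin n → ℝ) (hp : ∀ j, 0 ≤ p j) :
    ∑ j, p j * w j ≤ (∑ j, p j) * Finset.univ.sup' hne w := by
  rw [Finset.sum_mul]
  exact Finset.sum_le_sum fun j _ =>
    mul_le_mul_of_nonneg_left (Finset.le_sup' w (Finset.mem_univ j)) (hp j)

lemma inf_le_wsum {n : ℕ} (hne : (Finset.univ : Finset (Fin n)).Nonempty)
    (p w : Fin n → ℝ) (hp : ∀ j, 0 ≤ p j) :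
    (∑ j, p j) * Finset.univ.inf' hne w ≤ ∑ j, p j * w j := by
  rw [Finset.sum_mul]
  exact Finset.sum_le_sum fun j _ =>
    mul_le_mul_of_nonneg_left (Finset.inf'_le w (Finset.mem_univ j)) (hp j)

/-- If the communication digraph has a spanning diverging tree, then every
solution of `ẋ = −Lx` converges, as `t → ∞`, to a vector with equal components. -/
theorem consensus_convergence {n : ℕ} (hn : 0 < n) (a : Matrix (Fin n) (Fin n) ℝ)
    (hnn : ∀ i j, 0 ≤ a i j)
    (htree : ∃ F, IsOutForest a F ∧ F.card = n - 1)
    (x : ℝ → Fin n → ℝ)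
    (hx : ∀ t, HasDerivAt x (-(kirchhoff a).mulVec (x t)) t) :
    ∃ c : ℝ, Filter.Tendsto x Filter.atTop (nhds fun _ => c) := by
  classical
  haveI : Nonempty (Fin n) := ⟨⟨0, hn⟩⟩
  have hne : (Finset.univ : Finset (Fin n)).Nonempty := Finset.univ_nonempty
  obtain ⟨F, hF, hFcard⟩ := htree
  obtain ⟨r, hroot⟩ := exists_root hn a F hF hFcard
  set L : Matrix (Fin n) (Fin n) ℝ := kirchhoff a with hLdef
  set B' : Matrix (Fin n) (Fin n) ℝ := -L with hB'def
  set c : ℝ := 1 + ∑ i, ∑ k ∈ Finset.univ.erase i, a i k with hcdef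
  set B : Matrix (Fin n) (Fin n) ℝ := c • 1 + B' with hBdef
  -- basic entry computations
  have hLentry : ∀ i j, L i j =
      if i = j then ∑ k ∈ Finset.univ.erase i, a i k else -a i j := fun i j => rfl
  have hrowle : ∀ i : Fin n, ∑ k ∈ Finset.univ.erase i, a i k ≤ c - 1 := by
    intro i
    have : ∑ k ∈ Finset.univ.erase i, a i k ≤ ∑ i, ∑ k ∈ Finset.univ.erase i, a i k :=
      Finset.single_le_sum (f := fun i => ∑ k ∈ Finset.univ.erase i, a i k)
        (fun i _ => Finset.sum_nonneg fun k _ => hnn i k) (Finset.mem_univ i)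
    simp only [hcdef]; linarith
  have hBentry : ∀ i j, B i j = (if i = j then c - ∑ k ∈ Finset.univ.erase i, a i k
      else a i j) := by
    intro i j
    by_cases h : i = j
    · subst h
      rw [if_pos rfl, hBdef, Matrix.add_apply, Matrix.smul_apply, Matrix.one_apply_eq,
        hB'def, Matrix.neg_apply, hLentry, if_pos rfl, smul_eq_mul]
      ring
    · rw [if_neg h, hBdef, Matrix.add_apply, Matrix.smul_apply, Matrix.one_apply_ne h,
        hB'def, Matrix.neg_apply, hLentry, if_neg h, smul_eq_mul]
      ring
  have hBdiag : ∀ i, 0 < B i i := by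
    intro i
    rw [hBentry i i, if_pos rfl]
    have := hrowle i; linarith
  have hBnn : ∀ i j, 0 ≤ B i j := by
    intro i j
    rw [hBentry i j]
    by_cases h : i = j
    · rw [if_pos h]; subst h; have := hrowle i; linarith
    · rw [if_neg h]; exact hnn i j
  have hBstep : ∀ u v : Fin n, 0 < a v u → 0 < B v u := by
    intro u v h
    by_cases huv : v = u
    · subst huv; exact hBdiag v
    · rw [hBentry v u, if_neg huv]; exact h
  -- reachability gives positivity of exp B entries in column r
  have hreach : ∀ i, Relation.ReflTransGen (fun u v => 0 < B v u) r i := by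
    intro i
    exact Relation.ReflTransGen.mono (fun u v h => hBstep u v (hF.1 (u, v) h)) _ _ (hroot i)
  have hpowpos : ∀ i, ∃ k, 0 < (B ^ k) i r := by
    intro i
    induction hreach i with
    | refl => exact ⟨0, by simp [Matrix.one_apply]⟩
    | @tail b i hb hstep ih =>
      obtain ⟨k, hk⟩ := ih
      refine ⟨k + 1, ?_⟩
      rw [pow_succ', Matrix.mul_apply]
      exact Finset.sum_pos' (fun m _ => mul_nonneg (hBnn i m) (pow_entry_nonneg hBnn k m r))
        ⟨b, Finset.mem_univ b, mul_pos hstep hk⟩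
  have hexp_pos : ∀ i, 0 < (NormedSpace.exp B) i r := fun i =>
    let ⟨_, hk⟩ := hpowpos i
    exp_entry_pos hBnn hk
  -- the transition matrices
  set P : ℝ → Matrix (Fin n) (Fin n) ℝ := fun t => NormedSpace.exp (t • B') with hPdef
  have hPsplit : ∀ t : ℝ, P t = Real.exp (-(t * c)) • NormedSpace.exp (t • B) := by
    intro t
    have hsum : t • B' = (-(t * c)) • (1 : Matrix (Fin n) (Fin n) ℝ) + t • B := by
      rw [hBdef]; rw [smul_add, smul_smul]; module
    show NormedSpace.exp (t • B') = _
    rw [hsum, Matrix.exp_add_of_commute _ _ (((Commute.one_left (t • B)).smul_left _)),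
      exp_smul_one, smul_mul_assoc, one_mul]
  have hPnn : ∀ t : ℝ, 0 ≤ t → ∀ i j, 0 ≤ P t i j := by
    intro t ht i j
    rw [hPsplit t, Matrix.smul_apply]
    exact mul_nonneg (Real.exp_nonneg _)
      (exp_entry_nonneg (fun i j => smul_nonneg ht (hBnn i j)) i j)
  have hP1pos : ∀ i, 0 < P 1 i r := by
    intro i
    rw [hPsplit 1, Matrix.smul_apply, one_smul]
    exact mul_pos (Real.exp_pos _) (hexp_pos i)
  -- row sums are one
  have hLrow : L.mulVec (fun _ => 1) = 0 := by
    funext i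
    simp only [Matrix.mulVec, dotProduct, mul_one, Pi.zero_apply]
    rw [← Finset.add_sum_erase _ _ (Finset.mem_univ i)]
    have h1 : ∀ j ∈ Finset.univ.erase i, L i j = -a i j := by
      intro j hj
      rw [hLentry i j, if_neg (Ne.symm (Finset.mem_erase.mp hj).1)]
    rw [Finset.sum_congr rfl h1, hLentry i i, if_pos rfl, Finset.sum_neg_distrib]
    ring
  have hProw : ∀ t : ℝ, (P t).mulVec (fun _ => 1) = fun _ => 1 := by
    intro t
    refine exp_mulVec_one ?_
    rw [hB'def, Matrix.smul_mulVec, Matrix.neg_mulVec, hLrow]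
    simp
  have hPsum : ∀ (t : ℝ) (i : Fin n), ∑ j, P t i j = 1 := by
    intro t i
    have := congrFun (hProw t) i
    simpa [Matrix.mulVec, dotProduct] using this
  -- semigroup property
  have hPadd : ∀ s t : ℝ, P (s + t) = P s * P t := by
    intro s t
    rw [hPdef]
    show NormedSpace.exp ((s + t) • B') = _
    rw [add_smul]
    exact Matrix.exp_add_of_commute _ _ (((Commute.refl B').smul_left s).smul_right t)
  -- solution formula by uniqueness
  have hxder : ∀ t : ℝ, HasDerivAt x (B'.mulVec (x t)) t := by
    intro t
    have := hx t
    rwa [hB'def, Matrix.neg_mulVec]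
  have hsol : ∀ t : ℝ, 0 ≤ t → x t = (P t).mulVec (x 0) := by
    intro t ht
    set g : ℝ → Fin n → ℝ := fun s => (P s).mulVec (x 0) with hgdef
    have hgder : ∀ s : ℝ, HasDerivAt g (B'.mulVec (g s)) s := fun s =>
      hasDerivAt_exp_mulVec B' (x 0) s
    have CL := LinearMap.toContinuousLinearMap B'.mulVecLin
    have hlip : ∀ s : ℝ, LipschitzWith ‖LinearMap.toContinuousLinearMap B'.mulVecLin‖₊
        (fun z : Fin n → ℝ => B'.mulVec z) := by
      intro s
      have := (LinearMap.toContinuousLinearMap B'.mulVecLin).lipschitz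
      exact this
    have key : Set.EqOn x g (Set.Icc 0 t) := by
      refine ODE_solution_unique (v := fun _ z => B'.mulVec z) hlip
        (fun s _ => (hxder s).continuousAt.continuousWithinAt)
        (fun s _ => (hxder s).hasDerivWithinAt) 
        (fun s _ => (hgder s).continuousAt.continuousWithinAt)
        (fun s _ => (hgder s).hasDerivWithinAt) ?_
      rw [hgdef]
      show x 0 = (NormedSpace.exp ((0:ℝ) • B')).mulVec (x 0)
      rw [zero_smul, NormedSpace.exp_zero, Matrix.one_mulVec]
    exact key ⟨ht, le_rfl⟩
  have hxshift : ∀ t : ℝ, 0 ≤ t → ∀ s : ℝ, 0 ≤ s → x (t + s) = (P s).mulVec (x t) := by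
    intro t ht s hs
    rw [hsol (t + s) (by linarith), hsol t ht, add_comm t s, hPadd s t,
      ← Matrix.mulVec_mulVec]
  -- min / max machinery
  set m : ℝ → ℝ := fun t => Finset.univ.inf' hne (x t) with hmdef
  set M : ℝ → ℝ := fun t => Finset.univ.sup' hne (x t) with hMdef
  have hmM : ∀ t, m t ≤ M t := fun t =>
    (Finset.inf'_le (x t) (Finset.mem_univ r)).trans (Finset.le_sup' (x t) (Finset.mem_univ r))
  have hbounds : ∀ t : ℝ, 0 ≤ t → ∀ s : ℝ, 0 ≤ s → ∀ i,
      m t ≤ x (t + s) i ∧ x (t + s) i ≤ M t := by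
    intro t ht s hs i
    have hxe : x (t + s) i = ∑ j, P s i j * x t j := by
      rw [hxshift t ht s hs]; simp [Matrix.mulVec, dotProduct]
    constructor
    · have h := inf_le_wsum hne (fun j => P s i j) (x t) (fun j => hPnn s hs i j)
      rw [hPsum s i, one_mul] at h
      rw [hxe]; exact h
    · have h := wsum_le_sup hne (fun j => P s i j) (x t) (fun j => hPnn s hs i j)
      rw [hPsum s i, one_mul] at h
      rw [hxe]; exact h
  have hmono : ∀ t : ℝ, 0 ≤ t → ∀ s : ℝ, 0 ≤ s → m t ≤ m (t + s) ∧ M (t + s) ≤ M t := by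
    intro t ht s hs
    constructor
    · exact Finset.le_inf' hne _ fun i _ => (hbounds t ht s hs i).1
    · exact Finset.sup'_le hne _ fun i _ => (hbounds t ht s hs i).2
  -- the Doeblin coefficient
  set δ : ℝ := Finset.univ.inf' hne (fun i => P 1 i r) with hδdef
  have hδpos : 0 < δ := (Finset.lt_inf'_iff hne).mpr fun i _ => hP1pos i
  have hδler : ∀ i, δ ≤ P 1 i r := fun i => Finset.inf'_le _ (Finset.mem_univ i)
  have hδ1 : δ ≤ 1 := by
    have h1 : P 1 r r ≤ ∑ j, P 1 r j :=
      Finset.single_le_sum (fun j _ => hPnn 1 zero_le_one r j) (Finset.mem_univ r)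
    have h2 := hδler r
    rw [hPsum 1 r] at h1
    linarith
  have hite : ∀ w : Fin n → ℝ, ∑ j, (if j = r then δ else 0) * w j = δ * w r := by
    intro w
    rw [Finset.sum_eq_single r (fun b _ hb => by simp [hb])
      (fun h => absurd (Finset.mem_univ r) h)]
    simp
  have hcontr : ∀ t : ℝ, 0 ≤ t → M (t + 1) - m (t + 1) ≤ (1 - δ) * (M t - m t) := by
    intro t ht
    have hkey : ∀ i, δ * x t r + (1 - δ) * m t ≤ x (t + 1) i ∧
        x (t + 1) i ≤ δ * x t r + (1 - δ) * M t := by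
      intro i
      have hxe : x (t + 1) i = ∑ j, P 1 i j * x t j := by
        rw [hxshift t ht 1 zero_le_one]; simp [Matrix.mulVec, dotProduct]
      set q : Fin n → ℝ := fun j => P 1 i j - (if j = r then δ else 0) with hqdef
      have hqnn : ∀ j, 0 ≤ q j := by
        intro j
        have h1 : (if j = r then δ else 0) ≤ P 1 i j := by
          by_cases hj : j = r
          · rw [if_pos hj, hj]; exact hδler i
          · rw [if_neg hj]; exact hPnn 1 zero_le_one i j
        simp only [hqdef]
        linarith
      have hqsum : ∑ j, q j = 1 - δ := by
        rw [hqdef]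
        rw [Finset.sum_sub_distrib, hPsum 1 i]
        have := hite (fun _ => 1)
        simp only [mul_one] at this
        rw [Finset.sum_ite_eq' Finset.univ r (fun _ => δ)]
        simp
      have hsplit : ∑ j, P 1 i j * x t j = δ * x t r + ∑ j, q j * x t j := by
        have hterm : ∀ j, P 1 i j * x t j = q j * x t j + (if j = r then δ else 0) * x t j := by
          intro j; rw [hqdef]; ring
        rw [Finset.sum_congr rfl fun j _ => hterm j, Finset.sum_add_distrib, hite (x t)]
        ring
      constructor
      · have hw := inf_le_wsum hne q (x t) hqnn
        rw [hqsum] at hw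
        rw [hxe, hsplit]; linarith
      · have hw := wsum_le_sup hne q (x t) hqnn
        rw [hqsum] at hw
        rw [hxe, hsplit]; linarith
    have hM1 : M (t + 1) ≤ δ * x t r + (1 - δ) * M t :=
      Finset.sup'_le hne _ fun i _ => (hkey i).2
    have hm1 : δ * x t r + (1 - δ) * m t ≤ m (t + 1) :=
      Finset.le_inf' hne _ fun i _ => (hkey i).1
    linarith
  -- oscillation decays
  have hosc_nonneg : ∀ t, 0 ≤ M t - m t := fun t => sub_nonneg.mpr (hmM t)
  have hosc_nat : ∀ k : ℕ, M (k : ℝ) - m (k : ℝ) ≤ (1 - δ) ^ k * (M 0 - m 0) := by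
    intro k
    induction k with
    | zero => simp
    | succ k ih =>
      have h1 := hcontr (k : ℝ) (Nat.cast_nonneg k)
      have h2 : (1 - δ) * (M (k:ℝ) - m (k:ℝ)) ≤ (1 - δ) * ((1 - δ) ^ k * (M 0 - m 0)) :=
        mul_le_mul_of_nonneg_left ih (by linarith)
      push_cast
      calc M ((k:ℝ) + 1) - m ((k:ℝ) + 1) ≤ (1 - δ) * (M (k:ℝ) - m (k:ℝ)) := h1
        _ ≤ (1 - δ) * ((1 - δ) ^ k * (M 0 - m 0)) := h2
        _ = (1 - δ) ^ (k + 1) * (M 0 - m 0) := by ring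
  have hosc_le : ∀ t : ℝ, 0 ≤ t → M t - m t ≤ (1 - δ) ^ (⌊t⌋₊) * (M 0 - m 0) := by
    intro t ht
    have hfl : (⌊t⌋₊ : ℝ) ≤ t := Nat.floor_le ht
    have hdec := hmono (⌊t⌋₊ : ℝ) (Nat.cast_nonneg _) (t - ⌊t⌋₊) (by linarith)
    have heq : (⌊t⌋₊ : ℝ) + (t - ⌊t⌋₊) = t := by ring
    rw [heq] at hdec
    have h3 := hosc_nat ⌊t⌋₊
    linarith [hdec.1, hdec.2]
  -- limit of the minimum
  have hm'mono : Monotone (fun t : ℝ => m (max t 0)) := by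
    intro t t' htt'
    have h0 : (0:ℝ) ≤ max t 0 := le_max_right _ _
    have hle : max t 0 ≤ max t' 0 := max_le_max htt' le_rfl
    have h := (hmono (max t 0) h0 (max t' 0 - max t 0) (by linarith)).1
    have heq : max t 0 + (max t' 0 - max t 0) = max t' 0 := by ring
    rwa [heq] at h
  have hm'bdd : BddAbove (Set.range fun t : ℝ => m (max t 0)) := by
    refine ⟨M 0, ?_⟩
    rintro y ⟨t, rfl⟩
    have h0 : (0:ℝ) ≤ max t 0 := le_max_right _ _
    have h := (hmono 0 le_rfl (max t 0) h0).2
    have h1 := hmM (max t 0)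
    have heq : (0:ℝ) + max t 0 = max t 0 := by ring
    rw [heq] at h
    linarith
  set c0 : ℝ := ⨆ t : ℝ, m (max t 0) with hc0
  have hm'lim : Filter.Tendsto (fun t : ℝ => m (max t 0)) Filter.atTop (nhds c0) :=
    tendsto_atTop_ciSup hm'mono hm'bdd
  have hm_lim : Filter.Tendsto m Filter.atTop (nhds c0) := by
    refine hm'lim.congr' ?_
    filter_upwards [Filter.eventually_ge_atTop (0:ℝ)] with t ht
    rw [max_eq_left ht]
  have hosc_lim : Filter.Tendsto (fun t => M t - m t) Filter.atTop (nhds 0) := by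
    have h1 : Filter.Tendsto (fun k : ℕ => (1 - δ) ^ k) Filter.atTop (nhds 0) :=
      tendsto_pow_atTop_nhds_zero_of_lt_one (by linarith) (by linarith)
    have hg := (h1.comp (tendsto_nat_floor_atTop (α := ℝ))).mul_const (M 0 - m 0)
    rw [zero_mul] at hg
    refine squeeze_zero' ?_ ?_ hg
    · filter_upwards with t using hosc_nonneg t
    · filter_upwards [Filter.eventually_ge_atTop (0:ℝ)] with t ht using hosc_le t ht
  have hM_lim : Filter.Tendsto M Filter.atTop (nhds c0) := by
    have h := hm_lim.add hosc_lim
    rw [add_zero] at h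
    exact h.congr fun t => by ring
  refine ⟨c0, ?_⟩
  rw [tendsto_pi_nhds]
  intro i
  exact tendsto_of_tendsto_of_tendsto_of_le_of_le hm_lim hM_lim
    (fun t => Finset.inf'_le _ (Finset.mem_univ i))
    (fun t => Finset.le_sup' _ (Finset.mem_univ i))
end

section
/- Let J̄ be the normalized matrix of maximum out-forests of a weighted digraph Γ with Kirchhoff matrix L and out-forest dimension d. Then rank J̄ = d, J̄² = J̄, and L·J̄ = J̄·L = 0. -/
open Finset

variable {n : ℕ}

namespace BJaux

open Finset Relation

variable {n : ℕ}

/-- The step relation of a set of arcs. -/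
abbrev stp (F : Finset (Fin n × Fin n)) : Fin n → Fin n → Prop := fun x y => (x, y) ∈ F

lemma cycle_false {F : Finset (Fin n × Fin n)}
    (hF : ¬ ∃ f : ℕ → Fin n, ∀ k, (f k, f (k + 1)) ∈ F)
    (g : ℕ → Fin n) (s t : ℕ) (hst : s < t) (hg : g s = g t)
    (harc : ∀ u, s ≤ u → u < t → (g u, g (u + 1)) ∈ F) : False := by
  apply hF
  set c := t - s with hc
  have hc0 : 0 < c := by omega
  refine ⟨fun k => g (s + k % c), fun k => ?_⟩
  have hr : k % c < c := Nat.mod_lt _ hc0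
  have hmod : (k + 1) % c = (k % c + 1) % c := by
    conv_lhs => rw [Nat.add_mod]
    conv_rhs => rw [Nat.add_mod]
    simp
  rcases eq_or_lt_of_le (Nat.succ_le_of_lt hr) with h | h
  · -- wrap-around step
    have h0 : (k + 1) % c = 0 := by
      have hh : k % c + 1 = c := h
      rw [hmod, hh, Nat.mod_self]
    have hs1 : s + k % c + 1 = t := by omega
    have := harc (s + k % c) (by omega) (by omega)
    rw [hs1] at this
    simpa [h0, ← hg] using this
  · have h1 : (k + 1) % c = k % c + 1 := by rw [hmod, Nat.mod_eq_of_lt h]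
    have := harc (s + k % c) (by omega) (by omega)
    simpa [h1, Nat.add_assoc] using this

lemma path_of_rtg {F : Finset (Fin n × Fin n)} {u v : Fin n}
    (h : Relation.ReflTransGen (stp F) u v) :
    ∃ (m : ℕ) (g : ℕ → Fin n), g 0 = u ∧ g m = v ∧ ∀ s < m, (g s, g (s + 1)) ∈ F := by
  induction h with
  | refl => exact ⟨0, fun _ => u, rfl, rfl, fun s hs => absurd hs (by omega)⟩
  | @tail b c hub hbc ih =>
    obtain ⟨m, g, hg0, hgm, hgarc⟩ := ih
    refine ⟨m + 1, fun s => if s ≤ m then g s else c, by simp [hg0], by simp, ?_⟩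
    intro s hs
    rcases lt_or_eq_of_le (Nat.lt_succ_iff.mp hs) with h' | h'
    · simpa [Nat.le_of_lt h', Nat.succ_le_of_lt h'] using hgarc s h'
    · subst h'
      simpa [hgm, Nat.lt_irrefl] using hbc

lemma no_cycle {F : Finset (Fin n × Fin n)}
    (hF : ¬ ∃ f : ℕ → Fin n, ∀ k, (f k, f (k + 1)) ∈ F)
    {x y : Fin n} (hxy : (x, y) ∈ F) (hr : Relation.ReflTransGen (stp F) y x) : False := by
  obtain ⟨m, g, hg0, hgm, harc⟩ := path_of_rtg hr
  apply cycle_false hF (fun k => if k = 0 then x else g (k - 1)) 0 (m + 1) (by omega)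
  · simp [hgm]
  · intro u _ hum
    by_cases h : u = 0
    · subst h; simpa [hg0] using hxy
    · have h1 : u - 1 < m := by omega
      have := harc (u - 1) h1
      have h2 : u - 1 + 1 = u := by omega
      rw [h2] at this
      simpa [h, Nat.add_eq_zero] using this

/-- A finite digraph with no cycle-closing arcs has no infinite walk. -/
lemma no_walk_of_acyclic {F : Finset (Fin n × Fin n)}
    (hacy : ∀ x y, (x, y) ∈ F → ¬ Relation.ReflTransGen (stp F) y x) :
    ¬ ∃ f : ℕ → Fin n, ∀ k, (f k, f (k + 1)) ∈ F := by
  rintro ⟨f, hf⟩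
  obtain ⟨s, t, hne, heq⟩ := Finite.exists_ne_map_eq_of_infinite f
  wlog hst : s < t generalizing s t
  · exact this t s (Ne.symm hne) heq.symm (by omega)
  have hchain : ∀ d : ℕ, Relation.ReflTransGen (stp F) (f (s + 1)) (f (s + 1 + d)) := by
    intro d
    induction d with
    | zero => exact .refl
    | succ d ih => exact ih.tail (hf (s + 1 + d))
  have : Relation.ReflTransGen (stp F) (f (s + 1)) (f s) := by
    have := hchain (t - s - 1)
    have ht : s + 1 + (t - s - 1) = t := by omega
    rw [ht] at this
    rwa [← heq] at this
  exact hacy _ _ (hf s) this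

variable {a : Matrix (Fin n) (Fin n) ℝ}

lemma forest_acyclic {F : Finset (Fin n × Fin n)} (h : IsOutForest a F) :
    ∀ x y, (x, y) ∈ F → ¬ Relation.ReflTransGen (stp F) y x :=
  fun _ _ hxy hr => no_cycle h.2.2 hxy hr

lemma forest_of_parts {F : Finset (Fin n × Fin n)}
    (hpos : ∀ e ∈ F, 0 < a e.2 e.1)
    (hup : ∀ u u' v : Fin n, (u, v) ∈ F → (u', v) ∈ F → u = u')
    (hacy : ∀ x y, (x, y) ∈ F → ¬ Relation.ReflTransGen (stp F) y x) :
    IsOutForest a F :=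
  ⟨hpos, hup, no_walk_of_acyclic hacy⟩

lemma forest_subset {F G : Finset (Fin n × Fin n)} (h : IsOutForest a F) (hG : G ⊆ F) :
    IsOutForest a G := by
  refine ⟨fun e he => h.1 e (hG he), fun u u' v hu hu' => h.2.1 u u' v (hG hu) (hG hu'), ?_⟩
  rintro ⟨f, hf⟩
  exact h.2.2 ⟨f, fun k => hG (hf k)⟩

lemma no_selfloop {F : Finset (Fin n × Fin n)} (h : IsOutForest a F) (x : Fin n) :
    (x, x) ∉ F := fun hx => forest_acyclic h x x hx .refl

lemma rtg_mono {F G : Finset (Fin n × Fin n)} (hsub : G ⊆ F) {x y : Fin n}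
    (h : Relation.ReflTransGen (stp G) x y) : Relation.ReflTransGen (stp F) x y :=
  Relation.ReflTransGen.mono (fun _ _ hxy => hsub hxy : ∀ u v, stp G u v → stp F u v) x y h

/-- Comparability of ancestors in a graph with unique parents. -/
lemma reach_comparable {F : Finset (Fin n × Fin n)}
    (hup : ∀ u u' v : Fin n, (u, v) ∈ F → (u', v) ∈ F → u = u')
    {y z : Fin n} (hy : Relation.ReflTransGen (stp F) y z) :
    ∀ x, Relation.ReflTransGen (stp F) x z →
      Relation.ReflTransGen (stp F) x y ∨ Relation.ReflTransGen (stp F) y x := by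
  induction hy with
  | refl => exact fun x hx => .inl hx
  | @tail b c h1 h2 ih =>
    intro x hx
    rcases hx.cases_tail with rfl | ⟨d, hxd, hdc⟩
    · exact .inr (h1.tail h2)
    · have hdb : d = b := hup _ _ _ hdc h2
      subst hdb
      exact ih x hxd

lemma root_eq {F : Finset (Fin n × Fin n)}
    (hup : ∀ u u' v : Fin n, (u, v) ∈ F → (u', v) ∈ F → u = u')
    {j j' i : Fin n} (h : InTreeRootedAt F j i) (h' : InTreeRootedAt F j' i) : j = j' := by
  rcases reach_comparable hup h'.2 j h.2 with hr | hr
  · rcases hr.cases_tail with rfl | ⟨c, _, hc⟩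
    · rfl
    · exact absurd hc (h'.1 c)
  · rcases hr.cases_tail with rfl | ⟨c, _, hc⟩
    · rfl
    · exact absurd hc (h.1 c)

lemma exists_root {F : Finset (Fin n × Fin n)} (h : IsOutForest a F) (i : Fin n) :
    ∃ j, InTreeRootedAt F j i := by
  classical
  let g : ℕ → Fin n := fun k =>
    Nat.rec i (fun _ p => if h : ∃ u, (u, p) ∈ F then h.choose else p) k
  have hg0 : g 0 = i := rfl
  have hreach : ∀ s, Relation.ReflTransGen (stp F) (g s) i := by
    intro s
    induction s with
    | zero => exact .refl
    | succ s ih =>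
      by_cases hp : ∃ u, (u, g s) ∈ F
      · have harc : (g (s + 1), g s) ∈ F := by
          show (dite _ _ _, g s) ∈ F
          rw [dif_pos hp]
          exact hp.choose_spec
        exact Relation.ReflTransGen.head harc ih
      · have : g (s + 1) = g s := by
          show dite _ _ _ = g s
          rw [dif_neg hp]
        rw [this]; exact ih
  by_cases hall : ∀ s, ∃ u, (u, g s) ∈ F
  · exfalso
    have harc : ∀ s, (g (s + 1), g s) ∈ F := by
      intro s
      show (dite _ _ _, g s) ∈ F
      rw [dif_pos (hall s)]
      exact (hall s).choose_spec
    obtain ⟨s, t, hne, heq⟩ := Finite.exists_ne_map_eq_of_infinite g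
    wlog hst : s < t generalizing s t
    · exact this t s (Ne.symm hne) heq.symm (by omega)
    apply cycle_false h.2.2 (fun u => g (s + t - u)) s t hst
    · have h1 : s + t - s = t := by omega
      have h2 : s + t - t = s := by omega
      rw [h1, h2]; exact heq.symm
    · intro u hsu hut
      have h1 : s + t - u = (s + t - u - 1) + 1 := by omega
      have h2 : s + t - (u + 1) = s + t - u - 1 := by omega
      rw [h2, h1]
      exact harc _
  · push_neg at hall
    obtain ⟨s, hs⟩ := hall
    exact ⟨g s, fun u hu => hs u hu, hreach s⟩

end BJaux
namespace BJaux

open Finset Relation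

variable {n : ℕ} {a : Matrix (Fin n) (Fin n) ℝ}

lemma rtg_erase {F : Finset (Fin n × Fin n)} {q i x y : Fin n}
    (h : Relation.ReflTransGen (stp F) x y) :
    Relation.ReflTransGen (stp (F.erase (q, i))) x y ∨ Relation.ReflTransGen (stp F) i y := by
  induction h with
  | refl => exact .inl .refl
  | @tail b c h1 h2 ih =>
    by_cases he : (b, c) = (q, i)
    · right
      have : c = i := congrArg Prod.snd he
      subst this
      exact .refl
    · rcases ih with h | h
      · exact .inl (h.tail (Finset.mem_erase.mpr ⟨he, h2⟩))
      · exact .inr (h.tail h2)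

lemma rtg_insert_cases {G : Finset (Fin n × Fin n)} {l i x y : Fin n}
    (h : Relation.ReflTransGen (stp (insert (l, i) G)) x y) :
    Relation.ReflTransGen (stp G) x y ∨ Relation.ReflTransGen (stp G) i y := by
  induction h with
  | refl => exact .inl .refl
  | @tail b c h1 h2 ih =>
    rcases Finset.mem_insert.mp h2 with he | hG
    · right
      have : c = i := congrArg Prod.snd he
      subst this
      exact .refl
    · rcases ih with h | h
      · exact .inl (h.tail hG)
      · exact .inr (h.tail hG)

lemma rtg_insert_head {G : Finset (Fin n × Fin n)} {l i x y : Fin n}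
    (h : Relation.ReflTransGen (stp (insert (l, i) G)) x y) :
    Relation.ReflTransGen (stp G) x y ∨ Relation.ReflTransGen (stp G) x l := by
  induction h using Relation.ReflTransGen.head_induction_on with
  | refl => exact .inl .refl
  | @head b c hbc hcy ih =>
    rcases Finset.mem_insert.mp hbc with he | hG
    · right
      have : b = l := congrArg Prod.fst he
      subst this
      exact .refl
    · rcases ih with h | h
      · exact .inl (h.head hG)
      · exact .inr (h.head hG)

lemma forest_insert {G : Finset (Fin n × Fin n)} (hG : IsOutForest a G) {l i : Fin n}
    (hpos : 0 < a i l) (hnopar : ∀ u, (u, i) ∉ G)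
    (hnr : ¬ Relation.ReflTransGen (stp G) i l) :
    IsOutForest a (insert (l, i) G) := by
  refine forest_of_parts ?_ ?_ ?_
  · intro e he
    rcases Finset.mem_insert.mp he with rfl | h
    · exact hpos
    · exact hG.1 e h
  · intro u u' v hu hu'
    rcases Finset.mem_insert.mp hu with h1 | h1 <;> rcases Finset.mem_insert.mp hu' with h2 | h2
    · rw [Prod.mk.injEq] at h1 h2; rw [h1.1, h2.1]
    · rw [Prod.mk.injEq] at h1
      exact absurd (h1.2 ▸ h2) (hnopar u')
    · rw [Prod.mk.injEq] at h2
      exact absurd (h2.2 ▸ h1) (hnopar u)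
    · exact hG.2.1 u u' v h1 h2
  · intro x y hxy hr
    rcases Finset.mem_insert.mp hxy with he | hG'
    · have hx : x = l := congrArg Prod.fst he
      have hy : y = i := congrArg Prod.snd he
      subst hx; subst hy
      rcases rtg_insert_cases hr with h | h <;> exact hnr h
    · rcases rtg_insert_head hr with h | h
      · exact no_cycle hG.2.2 hG' h
      · rcases rtg_insert_cases hr with h2 | h2
        · exact no_cycle hG.2.2 hG' h2
        · exact hnr ((h2.tail hG').trans h)

open Classical in
/-- Parent of `i` in `F` (junk value `i` if none). -/
noncomputable def par (F : Finset (Fin n × Fin n)) (i : Fin n) : Fin n :=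
  if h : ∃ u, (u, i) ∈ F then h.choose else i

lemma par_mem {F : Finset (Fin n × Fin n)} {i : Fin n} (h : ∃ u, (u, i) ∈ F) :
    (par F i, i) ∈ F := by
  rw [par, dif_pos h]
  exact h.choose_spec

lemma par_eq {F : Finset (Fin n × Fin n)}
    (hup : ∀ u u' v : Fin n, (u, v) ∈ F → (u', v) ∈ F → u = u')
    {u i : Fin n} (h : (u, i) ∈ F) : par F i = u :=
  hup _ _ _ (par_mem ⟨u, h⟩) h

lemma inTree_self_iff {F : Finset (Fin n × Fin n)} {i : Fin n} :
    InTreeRootedAt F i i ↔ ∀ u, (u, i) ∉ F :=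
  ⟨fun h => h.1, fun h => ⟨h, .refl⟩⟩

lemma parent_exists {F : Finset (Fin n × Fin n)} {j i : Fin n}
    (h : InTreeRootedAt F j i) (hij : i ≠ j) : ∃ u, (u, i) ∈ F := by
  rcases h.2.cases_tail with h' | ⟨c, _, hc⟩
  · exact absurd h'.symm (Ne.symm hij)
  · exact ⟨c, hc⟩

lemma inTree_of_reach {F : Finset (Fin n × Fin n)}
    (hup : ∀ u u' v : Fin n, (u, v) ∈ F → (u', v) ∈ F → u = u')
    {j l x : Fin n} (hl : InTreeRootedAt F j l)
    (hx : Relation.ReflTransGen (stp F) x l) : InTreeRootedAt F j x := by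
  rcases reach_comparable hup hl.2 x hx with h | h
  · rcases h.cases_tail with rfl | ⟨c, _, hc⟩
    · exact ⟨hl.1, .refl⟩
    · exact absurd hc (hl.1 c)
  · exact ⟨hl.1, h⟩

/-- parent arc data for a non-root vertex of its tree -/
lemma par_spec {F : Finset (Fin n × Fin n)} (hF : IsOutForest a F) {j i : Fin n}
    (hT : InTreeRootedAt F j i) (hij : i ≠ j) :
    (par F i, i) ∈ F ∧ par F i ≠ i ∧ 0 < a i (par F i) ∧
      InTreeRootedAt (F.erase (par F i, i)) j (par F i) ∧
      (∀ u, (u, i) ∉ F.erase (par F i, i)) ∧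
      ¬ Relation.ReflTransGen (stp F) i (par F i) := by
  have hmem : (par F i, i) ∈ F := par_mem (parent_exists hT hij)
  have hnr : ¬ Relation.ReflTransGen (stp F) i (par F i) :=
    fun h => no_cycle hF.2.2 hmem h
  have hpi : par F i ≠ i := by
    intro h
    rw [h] at hmem
    exact no_selfloop hF i hmem
  refine ⟨hmem, hpi, hF.1 _ hmem, ?_, ?_, hnr⟩
  · constructor
    · intro u hu
      exact hT.1 u (Finset.mem_of_mem_erase hu)
    · have hjp : Relation.ReflTransGen (stp F) j (par F i) := by
        rcases hT.2.cases_tail with h' | ⟨c, hjc, hc⟩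
        · exact absurd h'.symm (Ne.symm hij)
        · have : c = par F i := (par_eq hF.2.1 hc).symm
          exact this ▸ hjc
      rcases rtg_erase (q := par F i) (i := i) hjp with h | h
      · exact h
      · exact absurd h hnr
  · intro u hu
    have h1 := Finset.mem_of_mem_erase hu
    have : u = par F i := (par_eq hF.2.1 h1).symm
    subst this
    exact absurd rfl (Finset.ne_of_mem_erase hu)

end BJaux
namespace BJaux

open Finset Relation

variable {n : ℕ}

open Classical in
noncomputable def Fset (a : Matrix (Fin n) (Fin n) ℝ) (k : ℕ) : Finset (Finset (Fin n × Fin n)) :=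
  univ.filter fun F => IsOutForest a F ∧ F.card = k

open Classical in
noncomputable def Tset (a : Matrix (Fin n) (Fin n) ℝ) (k : ℕ) (j i : Fin n) :
    Finset (Finset (Fin n × Fin n)) :=
  univ.filter fun F => IsOutForest a F ∧ F.card = k ∧ InTreeRootedAt F j i

noncomputable def Qm (a : Matrix (Fin n) (Fin n) ℝ) (k : ℕ) : Matrix (Fin n) (Fin n) ℝ :=
  Matrix.of fun i j => ∑ F ∈ Tset a k j i, forestWeight a F

noncomputable def qs (a : Matrix (Fin n) (Fin n) ℝ) (k : ℕ) : ℝ :=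
  ∑ F ∈ Fset a k, forestWeight a F

open Classical in
noncomputable def phi (i j : Fin n) (p : Option (Fin n) × Finset (Fin n × Fin n)) :
    Option (Fin n) × Finset (Fin n × Fin n) :=
  match p with
  | (some l, F) =>
      if Relation.ReflTransGen (stp F) i l then (some l, F)
      else if i = j then (none, insert (l, i) F)
      else (some (par F i), insert (l, i) (F.erase (par F i, i)))
  | (none, F) =>
      if i = j then (none, F)
      else (some (par F i), F.erase (par F i, i))

open Classical in
noncomputable def psi (i : Fin n) (p : Option (Fin n) × Finset (Fin n × Fin n)) :
    Option (Fin n) × Finset (Fin n × Fin n) :=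
  match p with
  | (some l, G) =>
      if Relation.ReflTransGen (stp G) i l then (some l, G)
      else if ∃ u, (u, i) ∈ G then (some (par G i), insert (l, i) (G.erase (par G i, i)))
      else (none, insert (l, i) G)
  | (none, G) =>
      if ∃ u, (u, i) ∈ G then (some (par G i), G.erase (par G i, i))
      else (none, G)

noncomputable def wgt (a : Matrix (Fin n) (Fin n) ℝ) (i : Fin n) :
    Option (Fin n) × Finset (Fin n × Fin n) → ℝ
  | (some l, F) => a i l * forestWeight a F
  | (none, F) => forestWeight a F

def Xp (a : Matrix (Fin n) (Fin n) ℝ) (k : ℕ) (i j : Fin n) :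
    Option (Fin n) × Finset (Fin n × Fin n) → Prop
  | (some l, F) => IsOutForest a F ∧ InTreeRootedAt F j i ∧ F.card = k ∧ l ≠ i ∧ 0 < a i l
  | (none, F) => IsOutForest a F ∧ InTreeRootedAt F j i ∧ F.card = k + 1

def Yp (a : Matrix (Fin n) (Fin n) ℝ) (k : ℕ) (i j : Fin n) :
    Option (Fin n) × Finset (Fin n × Fin n) → Prop
  | (some l, G) => IsOutForest a G ∧ InTreeRootedAt G j l ∧ G.card = k ∧ l ≠ i ∧ 0 < a i l
  | (none, G) => IsOutForest a G ∧ i = j ∧ G.card = k + 1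

end BJaux
namespace BJaux

open Finset Relation

variable {n : ℕ} {a : Matrix (Fin n) (Fin n) ℝ}

lemma phi_spec {k : ℕ} {i j : Fin n} {p : Option (Fin n) × Finset (Fin n × Fin n)}
    (hp : Xp a k i j p) :
    Yp a k i j (phi i j p) ∧ wgt a i (phi i j p) = wgt a i p ∧ psi i (phi i j p) = p := by
  classical
  obtain ⟨o, F⟩ := p
  match o with
  | some l =>
    obtain ⟨hF, hT, hcard, hli, hpos⟩ := hp
    by_cases hr : Relation.ReflTransGen (stp F) i l
    · have h1 : phi i j (some l, F) = (some l, F) := by simp only [phi, if_pos hr]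
      rw [h1]
      exact ⟨⟨hF, ⟨hT.1, hT.2.trans hr⟩, hcard, hli, hpos⟩, rfl,
        by simp only [psi, if_pos hr]⟩
    · by_cases hij : i = j
      · subst hij
        have hnopar : ∀ u, (u, i) ∉ F := hT.1
        have hmemF : (l, i) ∉ F := hnopar l
        have hF' : IsOutForest a (insert (l, i) F) := forest_insert hF hpos hnopar hr
        have h1 : phi i i (some l, F) = (none, insert (l, i) F) := by
          simp only [phi, if_neg hr, eq_self_iff_true, if_true]
        rw [h1]
        have hw : forestWeight a (insert (l, i) F) = a i l * forestWeight a F := by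
          rw [forestWeight, Finset.prod_insert hmemF]; rfl
        refine ⟨⟨hF', rfl, by rw [Finset.card_insert_of_notMem hmemF, hcard]⟩, ?_, ?_⟩
        · show forestWeight a (insert (l, i) F) = a i l * forestWeight a F
          exact hw
        · have hex : ∃ u, (u, i) ∈ insert (l, i) F := ⟨l, Finset.mem_insert_self _ _⟩
          have hpl : par (insert (l, i) F) i = l :=
            par_eq hF'.2.1 (Finset.mem_insert_self _ _)
          simp only [psi, if_pos hex, hpl, Finset.erase_insert hmemF]
      · obtain ⟨hmem, hpi, hpa, hTp, hnopar', hnr⟩ := par_spec hF hT (fun h => hij h)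
        set p0 := par F i with hp0
        set F' := insert (l, i) (F.erase (p0, i)) with hF'def
        have hmemE : (l, i) ∉ F.erase (p0, i) := hnopar' l
        have hGf : IsOutForest a (F.erase (p0, i)) := forest_subset hF (Finset.erase_subset _ _)
        have hnrE : ¬ Relation.ReflTransGen (stp (F.erase (p0, i))) i l :=
          fun h => hr (rtg_mono (Finset.erase_subset _ _) h)
        have hF'f : IsOutForest a F' := forest_insert hGf hpos hnopar' hnrE
        have hk1 : 1 ≤ F.card := Finset.card_pos.mpr ⟨_, hmem⟩ 
        have hcard' : F'.card = k := by
          rw [hF'def, Finset.card_insert_of_notMem hmemE, Finset.card_erase_of_mem hmem, hcard]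
          omega
        have h1 : phi i j (some l, F) = (some p0, F') := by
          simp only [phi, if_neg hr, if_neg hij]
          rfl
        rw [h1]
        have hT' : InTreeRootedAt F' j p0 := by
          refine ⟨?_, rtg_mono (Finset.subset_insert _ _) hTp.2⟩
          intro u hu
          rcases Finset.mem_insert.mp hu with he | hG'
          · exact hij (congrArg Prod.snd he).symm
          · exact hT.1 u (Finset.mem_of_mem_erase hG')
        have hw1 : forestWeight a F' = a i l * forestWeight a (F.erase (p0, i)) := by
          rw [hF'def, forestWeight, Finset.prod_insert hmemE]; rfl
        have hw2 : forestWeight a F = a i p0 * forestWeight a (F.erase (p0, i)) := by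
          rw [forestWeight, ← Finset.mul_prod_erase F _ hmem]; rfl
        refine ⟨⟨hF'f, hT', hcard', hpi, hpa⟩, ?_, ?_⟩
        · show a i p0 * forestWeight a F' = a i l * forestWeight a F
          rw [hw1, hw2]; ring
        · have hnr' : ¬ Relation.ReflTransGen (stp F') i p0 := by
            intro h
            rcases rtg_insert_head h with h2 | h2
            · exact hnr (rtg_mono (Finset.erase_subset _ _) h2)
            · exact hnrE h2
          have hex : ∃ u, (u, i) ∈ F' := ⟨l, Finset.mem_insert_self _ _⟩
          have hpl : par F' i = l := par_eq hF'f.2.1 (Finset.mem_insert_self _ _)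
          simp only [psi, if_neg hnr', if_pos hex, hpl]
          rw [hF'def, Finset.erase_insert hmemE, Finset.insert_erase hmem]
  | none =>
    obtain ⟨hF, hT, hcard⟩ := hp
    by_cases hij : i = j
    · subst hij
      have h1 : phi i i (none, F) = (none, F) := by simp only [phi, eq_self_iff_true, if_true]
      rw [h1]
      refine ⟨⟨hF, rfl, hcard⟩, rfl, ?_⟩
      have hex : ¬ ∃ u, (u, i) ∈ F := fun ⟨u, hu⟩ => hT.1 u hu
      simp only [psi, if_neg hex]
    · obtain ⟨hmem, hpi, hpa, hTp, hnopar', hnr⟩ := par_spec hF hT (fun h => hij h)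
      set p0 := par F i with hp0
      have h1 : phi i j (none, F) = (some p0, F.erase (p0, i)) := by
        simp only [phi, if_neg hij]
        rfl
      rw [h1]
      have hcard' : (F.erase (p0, i)).card = k := by
        rw [Finset.card_erase_of_mem hmem, hcard]
        omega
      have hGf : IsOutForest a (F.erase (p0, i)) := forest_subset hF (Finset.erase_subset _ _)
      have hw : forestWeight a F = a i p0 * forestWeight a (F.erase (p0, i)) := by
        rw [forestWeight, ← Finset.mul_prod_erase F _ hmem]; rfl
      refine ⟨⟨hGf, hTp, hcard', hpi, hpa⟩, hw.symm, ?_⟩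
      have hnr0 : ¬ Relation.ReflTransGen (stp (F.erase (p0, i))) i p0 :=
        fun h => hnr (rtg_mono (Finset.erase_subset _ _) h)
      have hex : ¬ ∃ u, (u, i) ∈ F.erase (p0, i) := fun ⟨u, hu⟩ => hnopar' u hu
      simp only [psi, if_neg hnr0, if_neg hex, Finset.insert_erase hmem]

end BJaux
namespace BJaux

open Finset Relation

variable {n : ℕ} {a : Matrix (Fin n) (Fin n) ℝ}

lemma psi_spec {k : ℕ} {i j : Fin n} {q : Option (Fin n) × Finset (Fin n × Fin n)}
    (hq : Yp a k i j q) :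
    Xp a k i j (psi i q) ∧ phi i j (psi i q) = q := by
  classical
  obtain ⟨o, G⟩ := q
  match o with
  | some l =>
    obtain ⟨hG, hTl, hcard, hli, hpos⟩ := hq
    by_cases hr : Relation.ReflTransGen (stp G) i l
    · have h1 : psi i (some l, G) = (some l, G) := by simp only [psi, if_pos hr]
      rw [h1]
      exact ⟨⟨hG, inTree_of_reach hG.2.1 hTl hr, hcard, hli, hpos⟩,
        by simp only [phi, if_pos hr]⟩
    · have hij : i ≠ j := by
        rintro rfl
        exact hr hTl.2
      by_cases hex : ∃ u, (u, i) ∈ G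
      · have hq' : (par G i, i) ∈ G := par_mem hex
        set q0 := par G i with hq0
        have hq0i : q0 ≠ i := by
          intro h
          rw [h] at hq'
          exact no_selfloop hG i hq'
        set G0 := G.erase (q0, i) with hG0def
        have hG0 : IsOutForest a G0 := forest_subset hG (Finset.erase_subset _ _)
        have hnopar0 : ∀ u, (u, i) ∉ G0 := by
          intro u hu
          have h1 := Finset.mem_of_mem_erase hu
          have : q0 = u := par_eq hG.2.1 h1
          rw [← this] at hu
          exact Finset.notMem_erase _ _ hu
        have hmemE : (l, i) ∉ G0 := hnopar0 l
        have hnr0 : ¬ Relation.ReflTransGen (stp G0) i l :=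
          fun h => hr (rtg_mono (Finset.erase_subset _ _) h)
        set F := insert (l, i) G0 with hFdef
        have hFf : IsOutForest a F := forest_insert hG0 hpos hnopar0 hnr0
        have hcardF : F.card = k := by
          rw [hFdef, Finset.card_insert_of_notMem hmemE, hG0def,
            Finset.card_erase_of_mem hq', hcard]
          have : 1 ≤ G.card := Finset.card_pos.mpr ⟨_, hq'⟩
          omega
        have hTi : InTreeRootedAt F j i := by
          constructor
          · intro u hu
            rcases Finset.mem_insert.mp hu with he | hG'
            · exact hij ((congrArg Prod.snd he).symm)
            · exact hTl.1 u (Finset.mem_of_mem_erase hG')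
          · have hjl : Relation.ReflTransGen (stp G0) j l := by
              rcases rtg_erase (q := q0) (i := i) hTl.2 with h | h
              · exact h
              · exact absurd h hr
            exact (rtg_mono (Finset.subset_insert _ _) hjl).tail (Finset.mem_insert_self _ _)
        have h1 : psi i (some l, G) = (some q0, F) := by
          simp only [psi, if_neg hr, if_pos hex]
          rfl
        rw [h1]
        refine ⟨⟨hFf, hTi, hcardF, hq0i, hG.1 _ hq'⟩, ?_⟩
        have hnr' : ¬ Relation.ReflTransGen (stp F) i q0 := by
          intro h
          rcases rtg_insert_head h with h2 | h2
          · exact no_cycle hG.2.2 hq' (rtg_mono (Finset.erase_subset _ _) h2)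
          · exact hnr0 h2
        have hpl : par F i = l := par_eq hFf.2.1 (Finset.mem_insert_self _ _)
        simp only [phi, if_neg hnr', if_neg hij, hpl]
        rw [hFdef, Finset.erase_insert hmemE, hG0def, Finset.insert_erase hq']
      · push_neg at hex
        set F := insert (l, i) G with hFdef
        have hmemG : (l, i) ∉ G := hex l
        have hFf : IsOutForest a F := forest_insert hG hpos hex hr
        have hTi : InTreeRootedAt F j i := by
          constructor
          · intro u hu
            rcases Finset.mem_insert.mp hu with he | hG'
            · exact hij ((congrArg Prod.snd he).symm)
            · exact hTl.1 u hG'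
          · exact (rtg_mono (Finset.subset_insert _ _) hTl.2).tail (Finset.mem_insert_self _ _)
        have hnex : ¬ ∃ u, (u, i) ∈ G := by
          rintro ⟨u, hu⟩
          exact hex u hu
        have h1 : psi i (some l, G) = (none, F) := by
          simp only [psi, if_neg hr, if_neg hnex]
          rfl
        rw [h1]
        refine ⟨⟨hFf, hTi, by rw [hFdef, Finset.card_insert_of_notMem hmemG, hcard]⟩, ?_⟩
        have hpl : par F i = l := par_eq hFf.2.1 (Finset.mem_insert_self _ _)
        simp only [phi, if_neg hij, hpl]
        rw [hFdef, Finset.erase_insert hmemG]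
  | none =>
    obtain ⟨hG, hij, hcard⟩ := hq
    subst hij
    by_cases hex : ∃ u, (u, i) ∈ G
    · have hq' : (par G i, i) ∈ G := par_mem hex
      set q0 := par G i with hq0
      have hq0i : q0 ≠ i := by
        intro h
        rw [h] at hq'
        exact no_selfloop hG i hq'
      set G0 := G.erase (q0, i) with hG0def
      have hG0 : IsOutForest a G0 := forest_subset hG (Finset.erase_subset _ _)
      have hnopar0 : ∀ u, (u, i) ∉ G0 := by
        intro u hu
        have h1 := Finset.mem_of_mem_erase hu
        have : q0 = u := par_eq hG.2.1 h1
        rw [← this] at hu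
        exact Finset.notMem_erase _ _ hu
      have h1 : psi i (none, G) = (some q0, G0) := by
        simp only [psi, if_pos hex]
        rfl
      rw [h1]
      refine ⟨⟨hG0, ⟨hnopar0, .refl⟩, by
        rw [hG0def, Finset.card_erase_of_mem hq', hcard]; omega, hq0i, hG.1 _ hq'⟩, ?_⟩
      have hnr' : ¬ Relation.ReflTransGen (stp G0) i q0 :=
        fun h => no_cycle hG.2.2 hq' (rtg_mono (Finset.erase_subset _ _) h)
      simp only [phi, if_neg hnr', eq_self_iff_true, if_true]
      rw [hG0def, Finset.insert_erase hq']
    · have h1 : psi i (none, G) = (none, G) := by simp only [psi, if_neg hex]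
      rw [h1]
      push_neg at hex
      refine ⟨⟨hG, ⟨hex, .refl⟩, hcard⟩, ?_⟩
      simp only [phi, eq_self_iff_true, if_true]

end BJaux
namespace BJaux

open Finset Relation

variable {n : ℕ}

open Classical in
lemma key_bij (a : Matrix (Fin n) (Fin n) ℝ) (k : ℕ) (i j : Fin n) :
    ∑ p ∈ univ.filter (Xp a k i j), wgt a i p = ∑ q ∈ univ.filter (Yp a k i j), wgt a i q := by
  refine Finset.sum_bij' (fun p _ => phi i j p) (fun q _ => psi i q) ?_ ?_ ?_ ?_ ?_
  · intro p hp
    rw [Finset.mem_filter] at hp ⊢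
    exact ⟨Finset.mem_univ _, (phi_spec hp.2).1⟩
  · intro q hq
    rw [Finset.mem_filter] at hq ⊢
    exact ⟨Finset.mem_univ _, (psi_spec hq.2).1⟩
  · intro p hp
    rw [Finset.mem_filter] at hp
    exact (phi_spec hp.2).2.2
  · intro q hq
    rw [Finset.mem_filter] at hq
    exact (psi_spec hq.2).2
  · intro p hp
    rw [Finset.mem_filter] at hp
    exact ((phi_spec hp.2).2.1).symm

end BJaux
namespace BJaux

open Finset Relation

variable {n : ℕ}

open Classical in
lemma keyX (a : Matrix (Fin n) (Fin n) ℝ) (hnn : ∀ i j, 0 ≤ a i j) (k : ℕ) (i j : Fin n) :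
    ∑ p ∈ univ.filter (Xp a k i j), wgt a i p
      = Qm a (k + 1) i j + ∑ l ∈ univ.erase i, a i l * Qm a k i j := by
  rw [Finset.sum_filter, Fintype.sum_prod_type, Fintype.sum_option]
  congr 1
  · simp only [Qm, Matrix.of_apply, Tset, Finset.sum_filter]
    exact Finset.sum_congr rfl fun F _ => if_congr (by unfold Xp; tauto) rfl rfl
  · have hinner : ∀ l : Fin n,
        (∑ F : Finset (Fin n × Fin n), if Xp a k i j (some l, F) then wgt a i (some l, F) else 0)
        = if l ≠ i ∧ 0 < a i l then a i l * Qm a k i j else 0 := by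
      intro l
      by_cases hc : l ≠ i ∧ 0 < a i l
      · rw [if_pos hc]
        have : ∀ F : Finset (Fin n × Fin n),
            (if Xp a k i j (some l, F) then wgt a i (some l, F) else 0)
            = a i l * (if IsOutForest a F ∧ F.card = k ∧ InTreeRootedAt F j i
                then forestWeight a F else 0) := by
          intro F
          rw [mul_ite, mul_zero]
          exact if_congr (by unfold Xp; tauto) rfl rfl
        rw [Finset.sum_congr rfl fun F _ => this F, ← Finset.mul_sum]
        congr 1
        simp only [Qm, Matrix.of_apply, Tset, Finset.sum_filter]
      · rw [if_neg hc]
        refine Finset.sum_eq_zero fun F _ => ?_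
        rw [if_neg]
        unfold Xp
        tauto
    rw [Finset.sum_congr rfl fun l _ => hinner l, ← Finset.sum_filter]
    refine Finset.sum_subset ?_ ?_
    · intro l hl
      rw [Finset.mem_filter] at hl
      exact Finset.mem_erase.mpr ⟨hl.2.1, Finset.mem_univ _⟩
    · intro l hl hnl
      have hli : l ≠ i := (Finset.mem_erase.mp hl).1
      have : ¬ (0 < a i l) := by
        intro hpos
        exact hnl (Finset.mem_filter.mpr ⟨Finset.mem_univ _, hli, hpos⟩)
      have h0 : a i l = 0 := le_antisymm (not_lt.mp this) (hnn i l)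
      rw [h0, zero_mul]

open Classical in
lemma keyY (a : Matrix (Fin n) (Fin n) ℝ) (hnn : ∀ i j, 0 ≤ a i j) (k : ℕ) (i j : Fin n) :
    ∑ q ∈ univ.filter (Yp a k i j), wgt a i q
      = (if i = j then qs a (k + 1) else 0) + ∑ l ∈ univ.erase i, a i l * Qm a k l j := by
  rw [Finset.sum_filter, Fintype.sum_prod_type, Fintype.sum_option]
  congr 1
  · by_cases hij : i = j
    · rw [if_pos hij]
      simp only [qs, Fset, Finset.sum_filter]
      exact Finset.sum_congr rfl fun F _ => if_congr (by unfold Yp; tauto) rfl rfl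
    · rw [if_neg hij]
      refine Finset.sum_eq_zero fun F _ => ?_
      rw [if_neg]
      unfold Yp
      tauto
  · have hinner : ∀ l : Fin n,
        (∑ F : Finset (Fin n × Fin n), if Yp a k i j (some l, F) then wgt a i (some l, F) else 0)
        = if l ≠ i ∧ 0 < a i l then a i l * Qm a k l j else 0 := by
      intro l
      by_cases hc : l ≠ i ∧ 0 < a i l
      · rw [if_pos hc]
        have : ∀ F : Finset (Fin n × Fin n),
            (if Yp a k i j (some l, F) then wgt a i (some l, F) else 0)
            = a i l * (if IsOutForest a F ∧ F.card = k ∧ InTreeRootedAt F j l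
                then forestWeight a F else 0) := by
          intro F
          rw [mul_ite, mul_zero]
          exact if_congr (by unfold Yp; tauto) rfl rfl
        rw [Finset.sum_congr rfl fun F _ => this F, ← Finset.mul_sum]
        congr 1
        simp only [Qm, Matrix.of_apply, Tset, Finset.sum_filter]
      · rw [if_neg hc]
        refine Finset.sum_eq_zero fun F _ => ?_
        rw [if_neg]
        unfold Yp
        tauto
    rw [Finset.sum_congr rfl fun l _ => hinner l, ← Finset.sum_filter]
    refine Finset.sum_subset ?_ ?_
    · intro l hl
      rw [Finset.mem_filter] at hl
      exact Finset.mem_erase.mpr ⟨hl.2.1, Finset.mem_univ _⟩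
    · intro l hl hnl
      have hli : l ≠ i := (Finset.mem_erase.mp hl).1
      have : ¬ (0 < a i l) := by
        intro hpos
        exact hnl (Finset.mem_filter.mpr ⟨Finset.mem_univ _, hli, hpos⟩)
      have h0 : a i l = 0 := le_antisymm (not_lt.mp this) (hnn i l)
      rw [h0, zero_mul]

lemma R1 (a : Matrix (Fin n) (Fin n) ℝ) (hnn : ∀ i j, 0 ≤ a i j) (k : ℕ) :
    Qm a (k + 1) + kirchhoff a * Qm a k = qs a (k + 1) • (1 : Matrix (Fin n) (Fin n) ℝ) := by
  ext i j
  have KEY : Qm a (k + 1) i j + ∑ l ∈ univ.erase i, a i l * Qm a k i j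
      = (if i = j then qs a (k + 1) else 0) + ∑ l ∈ univ.erase i, a i l * Qm a k l j := by
    rw [← keyX a hnn k i j, ← keyY a hnn k i j]
    exact key_bij a k i j
  have hmul : (kirchhoff a * Qm a k) i j
      = (∑ l ∈ univ.erase i, a i l * Qm a k i j) - ∑ l ∈ univ.erase i, a i l * Qm a k l j := by
    rw [Matrix.mul_apply]
    rw [← Finset.add_sum_erase _ _ (Finset.mem_univ i)]
    have h1 : kirchhoff a i i = ∑ l ∈ univ.erase i, a i l := by
      simp [kirchhoff]
    have h2 : ∀ l ∈ univ.erase i, kirchhoff a i l * Qm a k l j = -(a i l * Qm a k l j) := by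
      intro l hl
      have hli : l ≠ i := (Finset.mem_erase.mp hl).1
      have : kirchhoff a i l = -a i l := by
        simp [kirchhoff, (Ne.symm hli : i ≠ l)]
      rw [this, neg_mul]
    rw [Finset.sum_congr rfl h2, Finset.sum_neg_distrib, h1, Finset.sum_mul]
    ring
  have hsmul : (qs a (k + 1) • (1 : Matrix (Fin n) (Fin n) ℝ)) i j
      = if i = j then qs a (k + 1) else 0 := by
    simp [Matrix.one_apply, mul_ite]
  rw [Matrix.add_apply, hmul, hsmul]
  linarith [KEY]

end BJaux
namespace BJaux

open Finset Relation

variable {n : ℕ} {a : Matrix (Fin n) (Fin n) ℝ}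

lemma forest_empty : IsOutForest a (∅ : Finset (Fin n × Fin n)) := by
  refine ⟨fun e he => absurd he (Finset.notMem_empty _),
    fun u u' v hu => absurd hu (Finset.notMem_empty _), ?_⟩
  rintro ⟨f, hf⟩
  exact Finset.notMem_empty _ (hf 0)

lemma rtg_empty {x y : Fin n} (h : Relation.ReflTransGen (stp (∅ : Finset (Fin n × Fin n))) x y) :
    x = y := by
  induction h with
  | refl => rfl
  | tail h1 h2 ih => exact absurd h2 (Finset.notMem_empty _)

lemma Qm_zero : Qm a 0 = 1 := by
  classical
  ext i j
  rw [Qm, Matrix.of_apply, Matrix.one_apply]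
  by_cases hij : i = j
  · rw [if_pos hij]
    have hset : Tset a 0 j i = {∅} := by
      apply Finset.ext
      intro F
      simp only [Tset, Finset.mem_filter, Finset.mem_univ, true_and, Finset.mem_singleton]
      constructor
      · rintro ⟨hF, hc, hT⟩
        exact Finset.card_eq_zero.mp hc
      · rintro rfl
        subst hij
        exact ⟨forest_empty, Finset.card_empty,
          ⟨fun u h => absurd h (Finset.notMem_empty _), .refl⟩⟩
    rw [hset, Finset.sum_singleton, forestWeight, Finset.prod_empty]
  · rw [if_neg hij]
    have hset : Tset a 0 j i = ∅ := by
      apply Finset.eq_empty_of_forall_notMem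
      intro F hF
      simp only [Tset, Finset.mem_filter] at hF
      obtain ⟨_, hF1, hc, hT⟩ := hF
      have : F = ∅ := Finset.card_eq_zero.mp hc
      subst this
      exact hij (rtg_empty hT.2).symm
    rw [hset, Finset.sum_empty]

lemma qs_zero : qs a 0 = 1 := by
  classical
  have hset : Fset a 0 = {∅} := by
    apply Finset.ext
    intro F
    simp only [Fset, Finset.mem_filter, Finset.mem_univ, true_and, Finset.mem_singleton]
    constructor
    · rintro ⟨hF, hc⟩
      exact Finset.card_eq_zero.mp hc
    · rintro rfl
      exact ⟨forest_empty, Finset.card_empty⟩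
  rw [qs, hset, Finset.sum_singleton, forestWeight, Finset.prod_empty]

lemma bddAbove_sizes : BddAbove {k | ∃ F : Finset (Fin n × Fin n), IsOutForest a F ∧ F.card = k} := by
  refine ⟨Fintype.card (Fin n × Fin n), ?_⟩
  rintro k ⟨F, _, rfl⟩
  exact Finset.card_le_univ F

lemma forest_card_le {F : Finset (Fin n × Fin n)} (h : IsOutForest a F) :
    F.card ≤ maxForestSize a :=
  le_csSup bddAbove_sizes ⟨F, h, rfl⟩

lemma exists_max_forest (a : Matrix (Fin n) (Fin n) ℝ) :
    ∃ F : Finset (Fin n × Fin n), IsOutForest a F ∧ F.card = maxForestSize a := by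
  have hne : {k | ∃ F : Finset (Fin n × Fin n), IsOutForest a F ∧ F.card = k}.Nonempty :=
    ⟨0, ∅, forest_empty, Finset.card_empty⟩
  exact Nat.sSup_mem hne bddAbove_sizes

lemma Fset_top : Fset a (maxForestSize a + 1) = ∅ := by
  classical
  apply Finset.eq_empty_of_forall_notMem
  intro F hF
  simp only [Fset, Finset.mem_filter] at hF
  obtain ⟨_, hF1, hc⟩ := hF
  have := forest_card_le hF1
  omega

lemma Tset_top (j i : Fin n) : Tset a (maxForestSize a + 1) j i = ∅ := by
  classical
  apply Finset.eq_empty_of_forall_notMem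
  intro F hF
  simp only [Tset, Finset.mem_filter] at hF
  obtain ⟨_, hF1, hc, _⟩ := hF
  have := forest_card_le hF1
  omega

lemma Qm_top : Qm a (maxForestSize a + 1) = 0 := by
  ext i j
  rw [Qm, Matrix.of_apply, Tset_top, Finset.sum_empty]
  rfl

lemma qs_top : qs a (maxForestSize a + 1) = 0 := by
  rw [qs, Fset_top, Finset.sum_empty]

lemma commute_LQ (hnn : ∀ i j, 0 ≤ a i j) :
    ∀ k, kirchhoff a * Qm a k = Qm a k * kirchhoff a := by
  intro k
  induction k with
  | zero => rw [Qm_zero, Matrix.mul_one, Matrix.one_mul]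
  | succ k ih =>
    have hQ : Qm a (k + 1) = qs a (k + 1) • 1 - kirchhoff a * Qm a k :=
      eq_sub_of_add_eq (R1 a hnn k)
    rw [hQ, Matrix.mul_sub, Matrix.sub_mul, Matrix.mul_smul, Matrix.smul_mul,
      Matrix.mul_one, Matrix.one_mul]
    congr 1
    rw [Matrix.mul_assoc, ← ih, ← Matrix.mul_assoc]

lemma LQ_top (hnn : ∀ i j, 0 ≤ a i j) : kirchhoff a * Qm a (maxForestSize a) = 0 := by
  have h := R1 a hnn (maxForestSize a)
  rw [Qm_top, qs_top, zero_add, zero_smul] at h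
  exact h

lemma QL_top (hnn : ∀ i j, 0 ≤ a i j) : Qm a (maxForestSize a) * kirchhoff a = 0 := by
  rw [← commute_LQ hnn]
  exact LQ_top hnn

lemma QQ (hnn : ∀ i j, 0 ≤ a i j) :
    ∀ k, Qm a (maxForestSize a) * Qm a k = qs a k • Qm a (maxForestSize a) := by
  intro k
  induction k with
  | zero => rw [Qm_zero, Matrix.mul_one, qs_zero, one_smul]
  | succ k ih =>
    have hQ : Qm a (k + 1) = qs a (k + 1) • 1 - kirchhoff a * Qm a k :=
      eq_sub_of_add_eq (R1 a hnn k)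
    rw [hQ, Matrix.mul_sub, Matrix.mul_smul, Matrix.mul_one, ← Matrix.mul_assoc,
      QL_top hnn, Matrix.zero_mul, sub_zero]

lemma maxForests_eq (a : Matrix (Fin n) (Fin n) ℝ) : maxForests a = Fset a (maxForestSize a) := by
  classical
  apply Finset.ext
  intro F
  simp [maxForests, Fset]

lemma barJ_eq (a : Matrix (Fin n) (Fin n) ℝ) :
    barJ a = (qs a (maxForestSize a))⁻¹ • Qm a (maxForestSize a) := by
  classical
  ext i j
  rw [barJ, Matrix.of_apply, Matrix.smul_apply, Qm, Matrix.of_apply]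
  have hset : (maxForests a).filter (fun F => InTreeRootedAt F j i)
      = Tset a (maxForestSize a) j i := by
    apply Finset.ext
    intro F
    simp only [maxForests, Tset, Finset.mem_filter, Finset.mem_univ, true_and]
    tauto
  rw [hset, maxForests_eq]
  rw [div_eq_inv_mul]
  rfl

lemma qs_pos (a : Matrix (Fin n) (Fin n) ℝ) : 0 < qs a (maxForestSize a) := by
  classical
  obtain ⟨F0, hF0, hc0⟩ := exists_max_forest a
  refine Finset.sum_pos ?_ ⟨F0, by simp [Fset, hF0, hc0]⟩
  intro F hF
  simp only [Fset, Finset.mem_filter] at hF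
  exact Finset.prod_pos fun e he => hF.2.1.1 e he

end BJaux
namespace BJaux

open Finset Relation

variable {n : ℕ} {a : Matrix (Fin n) (Fin n) ℝ}

open Classical in
lemma card_roots {F : Finset (Fin n × Fin n)} (hF : IsOutForest a F) :
    (univ.filter fun v : Fin n => ∀ u, (u, v) ∉ F).card = n - F.card := by
  have hinj : F.card = (univ.filter fun v : Fin n => ∃ u, (u, v) ∈ F).card := by
    refine Finset.card_bij (fun e _ => e.2) ?_ ?_ ?_
    · intro e he
      refine Finset.mem_filter.mpr ⟨Finset.mem_univ _, e.1, ?_⟩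
      rw [Prod.mk.eta]
      exact he
    · intro e1 h1 e2 h2 h
      have h' : e1.2 = e2.2 := h
      have hm1 : (e1.1, e1.2) ∈ F := by rw [Prod.mk.eta]; exact h1
      have hm2 : (e2.1, e2.2) ∈ F := by rw [Prod.mk.eta]; exact h2
      rw [h'] at hm1
      have : e1.1 = e2.1 := hF.2.1 _ _ _ hm1 hm2
      exact Prod.ext this h'
    · intro v hv
      obtain ⟨u, hu⟩ := (Finset.mem_filter.mp hv).2
      exact ⟨(u, v), hu, rfl⟩
  have hsplit := Finset.card_filter_add_card_filter_not
    (s := (univ : Finset (Fin n))) (p := fun v => ∃ u, (u, v) ∈ F)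
  have hcongr : (univ.filter fun v : Fin n => ∀ u, (u, v) ∉ F)
      = (univ.filter fun v : Fin n => ¬ ∃ u, (u, v) ∈ F) := by
    apply Finset.filter_congr
    intro v _
    push_neg
    rfl
  have hn : (univ : Finset (Fin n)).card = n := by simp
  rw [hcongr]
  omega

open Classical in
lemma trace_Qm (a : Matrix (Fin n) (Fin n) ℝ) (k : ℕ) :
    Matrix.trace (Qm a k) = ((n - k : ℕ) : ℝ) * qs a k := by
  have h1 : Matrix.trace (Qm a k) = ∑ i : Fin n, ∑ F ∈ Tset a k i i, forestWeight a F := by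
    simp [Matrix.trace, Matrix.diag, Qm]
  rw [h1]
  have h2 : ∀ i : Fin n, ∑ F ∈ Tset a k i i, forestWeight a F
      = ∑ F ∈ Fset a k, if InTreeRootedAt F i i then forestWeight a F else 0 := by
    intro i
    rw [← Finset.sum_filter]
    congr 1
    apply Finset.ext
    intro F
    simp only [Tset, Fset, Finset.mem_filter, Finset.mem_univ, true_and]
    tauto
  rw [Finset.sum_congr rfl fun i _ => h2 i, Finset.sum_comm]
  have h3 : ∀ F ∈ Fset a k,
      (∑ i : Fin n, if InTreeRootedAt F i i then forestWeight a F else 0)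
      = ((n - k : ℕ) : ℝ) * forestWeight a F := by
    intro F hF
    simp only [Fset, Finset.mem_filter] at hF
    obtain ⟨_, hFor, hcard⟩ := hF
    rw [← Finset.sum_filter, Finset.sum_const, nsmul_eq_mul]
    congr 1
    have : (univ.filter fun i : Fin n => InTreeRootedAt F i i)
        = (univ.filter fun v : Fin n => ∀ u, (u, v) ∉ F) := by
      apply Finset.filter_congr
      intro v _
      exact inTree_self_iff
    rw [this, card_roots hFor, hcard]
  rw [Finset.sum_congr rfl h3, ← Finset.mul_sum]
  rfl

end BJaux
open BJaux in
/-- Properties of the normalized matrix of maximum out-forests `J̄`: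
`rank J̄ = d`, `J̄² = J̄` and `L J̄ = J̄ L = 0`. -/
theorem barJ_properties {n : ℕ} (a : Matrix (Fin n) (Fin n) ℝ)
    (hnn : ∀ i j, 0 ≤ a i j) :
    (barJ a).rank = outForestDim a ∧ barJ a * barJ a = barJ a ∧
      kirchhoff a * barJ a = 0 ∧ barJ a * kirchhoff a = 0 := by
  classical
  have hq := qs_pos a
  have hq0 : qs a (maxForestSize a) ≠ 0 := ne_of_gt hq
  have hbar := barJ_eq a
  have hidem : barJ a * barJ a = barJ a := by
    rw [hbar, Matrix.smul_mul, Matrix.mul_smul, QQ hnn (maxForestSize a), smul_smul, smul_smul]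
    congr 1
    field_simp
  have hLJ : kirchhoff a * barJ a = 0 := by
    rw [hbar, Matrix.mul_smul, LQ_top hnn, smul_zero]
  have hJL : barJ a * kirchhoff a = 0 := by
    rw [hbar, Matrix.smul_mul, QL_top hnn, smul_zero]
  have htraceJ : Matrix.trace (barJ a) = ((outForestDim a : ℕ) : ℝ) := by
    rw [hbar, Matrix.trace_smul, trace_Qm, smul_eq_mul]
    have hd : outForestDim a = n - maxForestSize a := rfl
    rw [hd]
    field_simp
  have hrank : (barJ a).rank = outForestDim a := by
    set f := (barJ a).mulVecLin with hfdef
    have hff : f ∘ₗ f = f := by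
      rw [hfdef, ← Matrix.mulVecLin_mul, hidem]
    have hproj : LinearMap.IsProj (LinearMap.range f) f := by
      constructor
      · intro x
        exact LinearMap.mem_range_self f x
      · rintro x ⟨y, rfl⟩
        exact DFunLike.congr_fun hff y
    have htr := hproj.trace
    have hmt : LinearMap.trace ℝ (Fin n → ℝ) f = Matrix.trace (barJ a) := by
      rw [LinearMap.trace_eq_matrix_trace ℝ (Pi.basisFun ℝ (Fin n)) f,
        LinearMap.toMatrix_eq_toMatrix']
      congr 1
      have hf' : f = Matrix.toLin' (barJ a) := (Matrix.toLin'_apply' _).symm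
      rw [hf', LinearMap.toMatrix'_toLin']
    have hcast : (((barJ a).rank : ℕ) : ℝ) = ((outForestDim a : ℕ) : ℝ) := by
      rw [Matrix.rank, ← htr, hmt, htraceJ]
    exact_mod_cast hcast
  exact ⟨hrank, hidem, hLJ, hJL⟩
end
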